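/- arXiv:2005.02287 — 6 statements merged into one kernel-verified Lean document; each statement's English description precedes it below -/
import Mathlib

section
/- Let u₁, …, u_N : [0,1] → ℝ be continuous functions and define the semi-discrete function u_s(r,θ) = Σ_{j=1}^N u_j(r) e_j(θ) on Q. Then for each index i = 1, …, N, ∫₀¹ r u_i(r)² dr ≤ ((1+Θ)/Θ) ( ‖u_s‖²_{L²_r(Q)} + ‖∂_θ u_s‖²_{L²_r(Q)} ), where ∂_θ u_s(r,θ) = Σ_{j=1}^N u_j(r) e_j′(θ) is defined for θ outside the partition nodes. -/
open MeasureTheory Set Real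

lemma continuousOn_union_closed' {α β : Type*} [TopologicalSpace α] [TopologicalSpace β]
    {f : α → β} {s t : Set α} (hs : IsClosed s) (ht : IsClosed t)
    (hfs : ContinuousOn f s) (hft : ContinuousOn f t) : ContinuousOn f (s ∪ t) := by
  intro x hx
  have hcs : x ∉ t → ContinuousWithinAt f t x := fun h =>
    continuousWithinAt_of_notMem_closure (by rwa [ht.closure_eq])
  have hcs' : x ∉ s → ContinuousWithinAt f s x := fun h =>
    continuousWithinAt_of_notMem_closure (by rwa [hs.closure_eq])
  rcases hx with hx | hx
  · by_cases hxt : x ∈ t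
    · exact (hfs x hx).union (hft x hxt)
    · exact (hfs x hx).union (hcs hxt)
  · by_cases hxs : x ∈ s
    · exact (hfs x hxs).union (hft x hx)
    · exact (hcs' hxs).union (hft x hx)

lemma oneD (Θ : ℝ) (hΘ : 0 < Θ) (w SL : ℝ → ℝ)
    (hw : ContinuousOn w (Icc 0 Θ))
    (hSL : Measurable SL) (M : ℝ) (hM : ∀ x, |SL x| ≤ M)
    (hd : ∀ x ∈ Ioo 0 Θ, HasDerivWithinAt w (SL x) (Ioi x) x)
    (p : ℝ) (hp : p ∈ Icc 0 Θ) :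
    w p ^ 2 ≤ (1 + Θ) / Θ *
      ((∫ x in Ioc (0:ℝ) Θ, w x ^ 2) + ∫ x in Ioc (0:ℝ) Θ, SL x ^ 2) := by
  have hfin : volume (Icc (0:ℝ) Θ) < ⊤ := by
    simp [Real.volume_Icc]
  have hM0 : 0 ≤ M := le_trans (abs_nonneg _) (hM 0)
  have hIw : IntegrableOn (fun x => w x ^ 2) (Icc 0 Θ) := (hw.pow 2).integrableOn_Icc
  have hISL : IntegrableOn (fun x => SL x ^ 2) (Icc 0 Θ) := by
    refine ⟨((hSL.pow_const 2).aestronglyMeasurable).restrict, ?_⟩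
    refine HasFiniteIntegral.restrict_of_bounded (C := M ^ 2) hfin ?_
    refine Filter.Eventually.of_forall fun x => ?_
    rw [Real.norm_eq_abs, abs_of_nonneg (sq_nonneg _), ← sq_abs]
    exact pow_le_pow_left₀ (abs_nonneg _) (hM x) 2
  obtain ⟨K, hK⟩ := isCompact_Icc.exists_bound_of_continuousOn hw
  obtain ⟨y₀, hy₀, hmin⟩ := isCompact_Icc.exists_isMinOn ⟨0, left_mem_Icc.mpr hΘ.le⟩ (hw.pow 2)
  set a := min p y₀ with ha_def
  set b := max p y₀ with hb_def
  have hab : a ≤ b := min_le_max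
  have ha : a ∈ Icc (0:ℝ) Θ := by
    rcases min_choice p y₀ with h | h <;> rw [ha_def, h] <;> assumption
  have hb : b ∈ Icc (0:ℝ) Θ := by
    rcases max_choice p y₀ with h | h <;> rw [hb_def, h] <;> assumption
  have hsub : Icc a b ⊆ Icc (0:ℝ) Θ := Icc_subset_Icc ha.1 hb.2
  set D : ℝ → ℝ := fun x => 2 * w x * SL x with hD_def
  have hDder : ∀ x ∈ Ioo a b, HasDerivWithinAt (fun y => w y ^ 2) (D x) (Ioi x) x := by
    intro x hx
    have hx' : x ∈ Ioo (0:ℝ) Θ := ⟨lt_of_le_of_lt ha.1 hx.1, lt_of_lt_of_le hx.2 hb.2⟩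
    have h2 : HasDerivWithinAt (fun y => w y ^ 2) _ (Ioi x) x := (hd x hx').pow 2
    simpa [hD_def, pow_one, mul_comm, mul_assoc, mul_left_comm] using h2
  have hKM : ∀ x ∈ Icc (0:ℝ) Θ, ‖D x‖ ≤ 2 * K * M := by
    intro x hx
    have h1 := hK x hx
    have h2 := hM x
    rw [Real.norm_eq_abs] at h1 ⊢
    have : |D x| = 2 * |w x| * |SL x| := by
      rw [hD_def]; rw [abs_mul, abs_mul]; norm_num
    rw [this]
    nlinarith [abs_nonneg (w x), abs_nonneg (SL x)]
  have hDint : IntegrableOn D (Icc a b) := by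
    refine ⟨?_, ?_⟩
    · exact (((hw.mono hsub).aestronglyMeasurable measurableSet_Icc).const_mul 2).mul
        hSL.aestronglyMeasurable.restrict
    · refine HasFiniteIntegral.restrict_of_bounded (C := 2 * K * M)
        (lt_of_le_of_lt (measure_mono hsub) hfin) ?_
      exact (ae_restrict_iff' measurableSet_Icc).mpr
        (Filter.Eventually.of_forall fun x hx => hKM x (hsub hx))
  have hDii : IntervalIntegrable D volume a b := by
    rw [← uIcc_of_le hab] at hDint
    exact hDint.intervalIntegrable
  have hftc : ∫ y in a..b, D y = w b ^ 2 - w a ^ 2 :=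
    intervalIntegral.integral_eq_sub_of_hasDeriv_right_of_le hab ((hw.mono hsub).pow 2) hDder hDii
  set Iw := ∫ x in Ioc (0:ℝ) Θ, w x ^ 2 with hIw_def
  set Is := ∫ x in Ioc (0:ℝ) Θ, SL x ^ 2 with hIs_def
  have hadd : IntegrableOn (fun x => w x ^ 2 + SL x ^ 2) (Icc 0 Θ) := hIw.add hISL
  have hIw' : IntegrableOn (fun x => w x ^ 2) (Ioc 0 Θ) := hIw.mono_set Ioc_subset_Icc_self
  have hISL' : IntegrableOn (fun x => SL x ^ 2) (Ioc 0 Θ) := hISL.mono_set Ioc_subset_Icc_self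
  have habs : |∫ y in a..b, D y| ≤ Iw + Is := by
    have h1 : |∫ y in a..b, D y| ≤ ∫ y in a..b, |D y| :=
      intervalIntegral.abs_integral_le_integral_abs hab
    have h2 : (∫ y in a..b, |D y|) = ∫ y in Ioc a b, |D y| :=
      intervalIntegral.integral_of_le hab
    have h3 : (∫ y in Ioc a b, |D y|) ≤ ∫ y in Ioc a b, (w y ^ 2 + SL y ^ 2) := by
      refine setIntegral_mono_on ((hDint.mono_set Ioc_subset_Icc_self).abs)
        (hadd.mono_set ((Ioc_subset_Icc_self).trans hsub)) measurableSet_Ioc ?_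
      intro x _
      have h2 := sq_abs (w x)
      have h3 := sq_abs (SL x)
      have : |D x| = 2 * |w x| * |SL x| := by
        rw [hD_def]; rw [abs_mul, abs_mul]; norm_num
      nlinarith [sq_nonneg (|w x| - |SL x|)]
    have h4 : (∫ y in Ioc a b, (w y ^ 2 + SL y ^ 2)) ≤ ∫ y in Ioc (0:ℝ) Θ, (w y ^ 2 + SL y ^ 2) := by
      refine setIntegral_mono_set (hadd.mono_set Ioc_subset_Icc_self)
        (Filter.Eventually.of_forall fun x => by positivity)
        (HasSubset.Subset.eventuallyLE (Ioc_subset_Ioc ha.1 hb.2))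
    have h5 : (∫ y in Ioc (0:ℝ) Θ, (w y ^ 2 + SL y ^ 2)) = Iw + Is :=
      integral_add hIw' hISL'
    linarith
  have hkey : w p ^ 2 ≤ w y₀ ^ 2 + (Iw + Is) := by
    have h6 : |w p ^ 2 - w y₀ ^ 2| = |w b ^ 2 - w a ^ 2| := by
      rcases le_total p y₀ with h | h
      · rw [ha_def, hb_def, min_eq_left h, max_eq_right h, abs_sub_comm]
      · rw [ha_def, hb_def, min_eq_right h, max_eq_left h]
    have h7 : w p ^ 2 - w y₀ ^ 2 ≤ |∫ y in a..b, D y| := by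
      rw [hftc, ← h6]
      exact le_abs_self _
    linarith
  have hmin' : Θ * w y₀ ^ 2 ≤ Iw := by
    have hc : (∫ _x in Ioc (0:ℝ) Θ, w y₀ ^ 2) = Θ * w y₀ ^ 2 := by
      rw [setIntegral_const, measureReal_def, Real.volume_Ioc, smul_eq_mul, sub_zero,
        ENNReal.toReal_ofReal hΘ.le]
    have := setIntegral_mono_on (f := fun _ => w y₀ ^ 2) (integrableOn_const (by simp [Real.volume_Ioc]))
      hIw' measurableSet_Ioc (fun x hx => hmin (Ioc_subset_Icc_self hx))
    rw [hc] at this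
    exact this
  have hIw0 : 0 ≤ Iw := setIntegral_nonneg measurableSet_Ioc fun x _ => sq_nonneg _
  have hIs0 : 0 ≤ Is := setIntegral_nonneg measurableSet_Ioc fun x _ => sq_nonneg _
  rw [div_mul_eq_mul_div, le_div_iff₀ hΘ]
  nlinarith


section c
variable (Θ : ℝ) (N : ℕ) (t : ℕ → ℝ) (e : ℕ → ℝ → ℝ)

lemma tmono_lt (htmono : ∀ j, j + 1 < N → t j < t (j + 1)) :
    ∀ n, n ≤ N - 1 → ∀ m, m < n → t m < t n := by
  intro n
  induction n with
  | zero => omega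
  | succ k ih =>
    intro hk m hm
    have hk1 : k + 1 < N := by omega
    rcases Nat.lt_or_ge m k with h | h
    · exact lt_trans (ih (by omega) m h) (htmono k hk1)
    · have : m = k := by omega
      subst this
      exact htmono m hk1

lemma tmono_le (htmono : ∀ j, j + 1 < N → t j < t (j + 1)) :
    ∀ m n, m ≤ n → n ≤ N - 1 → t m ≤ t n := by
  intro m n hmn hn
  rcases eq_or_lt_of_le hmn with h | h
  · rw [h]
  · exact (tmono_lt N t htmono n hn m h).le

lemma piece_exists (hN : 2 ≤ N) :
    ∀ x, t 0 ≤ x → x < t (N - 1) → ∃ k, k + 1 ≤ N - 1 ∧ t k ≤ x ∧ x < t (k + 1) := by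
  classical
  intro x hx0 hxN
  set P : ℕ → Prop := fun k => t k ≤ x with hP
  set k := Nat.findGreatest P (N - 2) with hk
  have hkle : k ≤ N - 2 := Nat.findGreatest_le (P := P) _
  have hPk : P k := Nat.findGreatest_spec (Nat.zero_le _) hx0
  refine ⟨k, by omega, hPk, ?_⟩
  by_contra hcon
  push_neg at hcon
  rcases Nat.lt_or_ge (k + 1) (N - 1) with h | h
  · have := Nat.findGreatest_is_greatest (P := P) (n := N - 2) (k := k + 1)
      (Nat.lt_succ_self _) (by omega)
    exact this hcon
  · have : k + 1 = N - 1 := by omega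
    rw [this] at hcon
    linarith

lemma piece_disj (hN : 2 ≤ N) (htmono : ∀ j, j + 1 < N → t j < t (j + 1)) :
    ∀ k, k + 1 ≤ N - 1 → ∀ x, t k ≤ x → x < t (k + 1) →
      ∀ m, m + 1 ≤ N - 1 → m ≠ k → x ∉ Ico (t m) (t (m + 1)) := by
  intro k hk x hx1 hx2 m hm hne hmem
  rcases lt_or_gt_of_ne hne with h | h
  · have h1 : t (m + 1) ≤ t k := tmono_le N t htmono (m + 1) k (by omega) (by omega)
    have := hmem.2
    linarith
  · have h1 : t (k + 1) ≤ t m := tmono_le N t htmono (k + 1) m (by omega) (by omega)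
    have := hmem.1
    linarith

lemma node_sum (hN : 2 ≤ N)
    (hnode : ∀ i < N, ∀ j < N, e i (t j) = if i = j then 1 else 0) :
    ∀ (c : ℕ → ℝ), ∀ k < N, ∑ j ∈ Finset.range N, c j * e j (t k) = c k := by
  intro c k hk
  rw [Finset.sum_eq_single k]
  · rw [hnode k hk k hk]; simp
  · intro j hj hne
    rw [hnode j (Finset.mem_range.mp hj) k hk]
    simp [hne]
  · intro h
    exact absurd (Finset.mem_range.mpr hk) h

end c

section fixedr
variable {Θ : ℝ} {N : ℕ} {t : ℕ → ℝ} {e : ℕ → ℝ → ℝ}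

lemma affine_hasDerivAt (C D c h x : ℝ) :
    HasDerivAt (fun y => C + D * (y - c) / h) (D / h) x := by
  have h1 : HasDerivAt (fun y : ℝ => y - c) 1 x := (hasDerivAt_id x).sub_const c
  have h2 := (h1.const_mul D).div_const h
  have h3 := h2.const_add C
  simpa using h3

lemma affine_hasDerivAt' (C m c x : ℝ) :
    HasDerivAt (fun y => C + m * (y - c)) m x := by
  have h1 : HasDerivAt (fun y : ℝ => y - c) 1 x := (hasDerivAt_id x).sub_const c
  have h2 := (h1.const_mul m).const_add C
  simpa using h2

/-- The key per-radius estimate. -/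
lemma fixedr (hΘ₀ : 0 < Θ) (hN : 2 ≤ N)
    (ht0 : t 0 = 0) (htN : t (N - 1) = Θ)
    (htmono : ∀ j, j + 1 < N → t j < t (j + 1))
    (hnode : ∀ i < N, ∀ j < N, e i (t j) = if i = j then 1 else 0)
    (hlin : ∀ i < N, ∀ j, j + 1 < N → ∀ x ∈ Icc (t j) (t (j + 1)),
      e i x = e i (t j) + (e i (t (j + 1)) - e i (t j)) * (x - t j) / (t (j + 1) - t j))
    (a : ℕ → ℝ) (r : ℝ) (hr : 0 ≤ r) (i : ℕ) (hi : i < N)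
    (w g : ℝ → ℝ) (hw : ∀ θ, w θ = ∑ j ∈ Finset.range N, a j * e j θ)
    (hg : ∀ θ, g θ = ∑ j ∈ Finset.range N, a j * deriv (e j) θ) :
    ENNReal.ofReal (r * (a i) ^ 2) ≤ ENNReal.ofReal ((1 + Θ) / Θ) *
      ((∫⁻ θ in Ioo (0:ℝ) Θ, ENNReal.ofReal (w θ ^ 2 * r)) +
        ∫⁻ θ in Ioo (0:ℝ) Θ, ENNReal.ofReal (g θ ^ 2 * r)) := by
  classical
  set s : ℕ → ℝ := fun k => (a (k + 1) - a k) / (t (k + 1) - t k) with hs_def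
  set SL : ℝ → ℝ := fun x => ∑ k ∈ Finset.range (N - 1),
    (Ico (t k) (t (k + 1))).indicator (fun _ => s k) x with hSL_def
  have hsum := node_sum N t e hN hnode
  -- piece formula for w
  have hpieceW : ∀ k, k + 1 ≤ N - 1 → ∀ x ∈ Icc (t k) (t (k + 1)),
      w x = a k + s k * (x - t k) := by
    intro k hk x hx
    have hkN : k < N := by omega
    have hk1N : k + 1 < N := by omega
    have h1 : w x = ∑ j ∈ Finset.range N, a j *
        (e j (t k) + (e j (t (k + 1)) - e j (t k)) * (x - t k) / (t (k + 1) - t k)) := by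
      rw [hw x]
      exact Finset.sum_congr rfl fun j hj => by
        rw [hlin j (Finset.mem_range.mp hj) k (by omega) x hx]
    rw [h1]
    have h2 : ∀ j ∈ Finset.range N, a j *
        (e j (t k) + (e j (t (k + 1)) - e j (t k)) * (x - t k) / (t (k + 1) - t k)) =
        a j * e j (t k) +
          (a j * e j (t (k + 1)) - a j * e j (t k)) * ((x - t k) / (t (k + 1) - t k)) := by
      intro j _
      ring
    rw [Finset.sum_congr rfl h2, Finset.sum_add_distrib, ← Finset.sum_mul,
      Finset.sum_sub_distrib, hsum a k hkN, hsum a (k + 1) hk1N]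
    rw [hs_def]
    ring
  -- continuity of w on [0, Θ]
  have hwcont : ContinuousOn w (Icc 0 Θ) := by
    have haff : ∀ k, k + 1 ≤ N - 1 → ContinuousOn w (Icc (t k) (t (k + 1))) := by
      intro k hk
      have hc : ContinuousOn (fun x => a k + s k * (x - t k)) (Icc (t k) (t (k + 1))) :=
        (continuous_const.add
          (continuous_const.mul (continuous_id.sub continuous_const))).continuousOn
      exact hc.congr fun x hx => hpieceW k hk x hx
    have hind : ∀ n, n ≤ N - 1 → ContinuousOn w (Icc (t 0) (t n)) := by
      intro n
      induction n with
      | zero => intro _; simpa [Icc_self] using continuousOn_singleton w (t 0)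
      | succ m ih =>
        intro hm
        have h1 := ih (by omega)
        have h2 := haff m hm
        have h3 := continuousOn_union_closed' isClosed_Icc isClosed_Icc h1 h2
        rwa [Icc_union_Icc_eq_Icc (tmono_le N t htmono 0 m (by omega) (by omega))
          (tmono_le N t htmono m (m + 1) (by omega) hm)] at h3
    have := hind (N - 1) le_rfl
    rwa [ht0, htN] at this
  -- value of SL on pieces
  have hSLval : ∀ k, k + 1 ≤ N - 1 → ∀ x, t k ≤ x → x < t (k + 1) → SL x = s k := by
    intro k hk x hx1 hx2
    show (∑ m ∈ Finset.range (N - 1), (Ico (t m) (t (m + 1))).indicator (fun _ => s m) x) = s k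
    rw [Finset.sum_eq_single k]
    · exact indicator_of_mem (show x ∈ Ico (t k) (t (k + 1)) from ⟨hx1, hx2⟩) _
    · intro m hm hne
      have hmlt := Finset.mem_range.mp hm
      exact indicator_of_notMem
        (piece_disj N t hN htmono k hk x hx1 hx2 m (by omega) hne) _
    · intro h
      exact absurd (Finset.mem_range.mpr (by omega)) h
  -- measurability and boundedness of SL
  have hSLmeas : Measurable SL :=
    Finset.measurable_sum _ fun k _ =>
      Measurable.indicator measurable_const measurableSet_Ico
  set M : ℝ := ∑ k ∈ Finset.range (N - 1), |s k| with hM_def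
  have hSLbd : ∀ x, |SL x| ≤ M := by
    intro x
    refine le_trans (Finset.abs_sum_le_sum_abs _ _) (Finset.sum_le_sum fun k _ => ?_)
    rw [Set.indicator_apply]
    split_ifs
    · exact le_rfl
    · simpa using abs_nonneg (s k)
  -- right derivative of w
  have hwderiv : ∀ x ∈ Ioo (0:ℝ) Θ, HasDerivWithinAt w (SL x) (Ioi x) x := by
    intro x hx
    have hx0 : t 0 ≤ x := by rw [ht0]; exact hx.1.le
    have hxN : x < t (N - 1) := by rw [htN]; exact hx.2
    obtain ⟨k, hk, hxk1, hxk2⟩ := piece_exists N t hN x hx0 hxN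
    rw [hSLval k hk x hxk1 hxk2]
    have haff := affine_hasDerivAt' (a k) (s k) (t k) x
    have h1 : HasDerivWithinAt w (s k) (Icc (t k) (t (k + 1))) x :=
      (haff.hasDerivWithinAt).congr (fun y hy => hpieceW k hk y hy)
        (hpieceW k hk x ⟨hxk1, hxk2.le⟩)
    refine h1.mono_of_mem_nhdsWithin ?_
    rw [mem_nhdsWithin]
    exact ⟨Iio (t (k + 1)), isOpen_Iio, hxk2,
      fun y hy => ⟨le_trans hxk1 (le_of_lt hy.2), hy.1.le⟩⟩
  -- the 1-D trace inequality
  have hti : t i ∈ Icc (0:ℝ) Θ :=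
    ⟨by rw [← ht0]; exact tmono_le N t htmono 0 i (by omega) (by omega),
     by rw [← htN]; exact tmono_le N t htmono i (N - 1) (by omega) le_rfl⟩
  have hone := oneD Θ hΘ₀ w SL hwcont hSLmeas M hSLbd hwderiv (t i) hti
  have hwti : w (t i) = a i := by rw [hw (t i)]; exact hsum a i hi
  rw [hwti, integral_Ioc_eq_integral_Ioo, integral_Ioc_eq_integral_Ioo] at hone
  -- integrability
  have hIwInt : IntegrableOn (fun x => w x ^ 2) (Ioo 0 Θ) :=
    ((hwcont.pow 2).integrableOn_Icc).mono_set Ioo_subset_Icc_self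
  have hISLInt : IntegrableOn (fun x => SL x ^ 2) (Ioo 0 Θ) := by
    refine ⟨((hSLmeas.pow_const 2).aestronglyMeasurable).restrict, ?_⟩
    refine HasFiniteIntegral.restrict_of_bounded (C := M ^ 2)
      (by simp [Real.volume_Ioo]) ?_
    refine Filter.Eventually.of_forall fun x => ?_
    rw [Real.norm_eq_abs, abs_of_nonneg (sq_nonneg _), ← sq_abs]
    exact pow_le_pow_left₀ (abs_nonneg _) (hSLbd x) 2
  set Iw := ∫ x in Ioo (0:ℝ) Θ, w x ^ 2 with hIw_def
  set Is := ∫ x in Ioo (0:ℝ) Θ, SL x ^ 2 with hIs_def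
  have hIw0 : 0 ≤ Iw := setIntegral_nonneg measurableSet_Ioo fun x _ => sq_nonneg _
  have hIs0 : 0 ≤ Is := setIntegral_nonneg measurableSet_Ioo fun x _ => sq_nonneg _
  -- lintegral of w part
  have hA : (∫⁻ θ in Ioo (0:ℝ) Θ, ENNReal.ofReal (w θ ^ 2 * r)) = ENNReal.ofReal (Iw * r) := by
    have h1 : ∀ θ, ENNReal.ofReal (w θ ^ 2 * r) =
        ENNReal.ofReal (w θ ^ 2) * ENNReal.ofReal r :=
      fun θ => ENNReal.ofReal_mul (sq_nonneg _)
    simp only [h1]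
    rw [lintegral_mul_const' _ _ ENNReal.ofReal_ne_top,
      ← ofReal_integral_eq_lintegral_ofReal hIwInt
        (Filter.Eventually.of_forall fun x => sq_nonneg _),
      ← ENNReal.ofReal_mul hIw0]
  -- a.e. identification of g with SL
  have hnodes : volume (t '' (Iio N)) = 0 :=
    Set.Finite.measure_zero ((Set.finite_Iio N).image t) volume
  have hderivSL : ∀ θ ∈ Ioo (0:ℝ) Θ, θ ∉ t '' (Iio N) → g θ = SL θ := by
    intro θ hθ hn
    obtain ⟨k, hk, h1, h2⟩ := piece_exists N t hN θ (by rw [ht0]; exact hθ.1.le)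
      (by rw [htN]; exact hθ.2)
    have hθk : t k < θ := lt_of_le_of_ne h1 fun h => hn ⟨k, mem_Iio.mpr (by omega), h⟩
    have hd : ∀ j ∈ Finset.range N, a j * deriv (e j) θ =
        (a j * e j (t (k + 1)) - a j * e j (t k)) / (t (k + 1) - t k) := by
      intro j hj
      have hjN := Finset.mem_range.mp hj
      have haff := affine_hasDerivAt (e j (t k)) (e j (t (k + 1)) - e j (t k)) (t k)
        (t (k + 1) - t k) θ
      have hev : e j =ᶠ[nhds θ] (fun y => e j (t k) +
          (e j (t (k + 1)) - e j (t k)) * (y - t k) / (t (k + 1) - t k)) := by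
        filter_upwards [Ioo_mem_nhds hθk h2] with y hy
        exact hlin j hjN k (by omega) y ⟨hy.1.le, hy.2.le⟩
      rw [(haff.congr_of_eventuallyEq hev).deriv]
      ring
    rw [hg θ, Finset.sum_congr rfl hd, ← Finset.sum_div, Finset.sum_sub_distrib,
      hsum a (k + 1) (by omega), hsum a k (by omega), hSLval k hk θ h1 h2, hs_def]
  -- lintegral of g part
  have hB : (∫⁻ θ in Ioo (0:ℝ) Θ, ENNReal.ofReal (g θ ^ 2 * r)) = ENNReal.ofReal (Is * r) := by
    have hcong : (∫⁻ θ in Ioo (0:ℝ) Θ, ENNReal.ofReal (g θ ^ 2 * r)) =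
        ∫⁻ θ in Ioo (0:ℝ) Θ, ENNReal.ofReal (SL θ ^ 2 * r) := by
      refine lintegral_congr_ae ?_
      filter_upwards [ae_restrict_of_ae (measure_eq_zero_iff_ae_notMem.mp hnodes),
        ae_restrict_mem measurableSet_Ioo] with θ h1 h2
      rw [hderivSL θ h2 h1]
    rw [hcong]
    have h1 : ∀ θ, ENNReal.ofReal (SL θ ^ 2 * r) =
        ENNReal.ofReal (SL θ ^ 2) * ENNReal.ofReal r :=
      fun θ => ENNReal.ofReal_mul (sq_nonneg _)
    simp only [h1]
    rw [lintegral_mul_const' _ _ ENNReal.ofReal_ne_top,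
      ← ofReal_integral_eq_lintegral_ofReal hISLInt
        (Filter.Eventually.of_forall fun x => sq_nonneg _),
      ← ENNReal.ofReal_mul hIs0]
  -- conclude
  rw [hA, hB, ← ENNReal.ofReal_add (mul_nonneg hIw0 hr) (mul_nonneg hIs0 hr),
    ← ENNReal.ofReal_mul (by positivity)]
  refine ENNReal.ofReal_le_ofReal ?_
  have hc0 : (0:ℝ) ≤ (1 + Θ) / Θ := by positivity
  nlinarith [hone, hr, mul_le_mul_of_nonneg_right hone hr]

end fixedr


/-- Squared weighted norm `‖v‖²_{L²_r(Q)} = ∫₀¹ ∫₀^Θ v(r,θ)² r dθ dr`, valued in `[0,∞]`. -/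
noncomputable def wL2r (Θ : ℝ) (v : ℝ × ℝ → ℝ) : ENNReal :=
  ∫⁻ r in Ioo (0:ℝ) 1, ∫⁻ θ in Ioo (0:ℝ) Θ, ENNReal.ofReal ((v (r, θ)) ^ 2 * r)

/-- Radial trace inequality for semi-discrete functions
`u_s(r,θ) = Σ_j u_j(r) e_j(θ)`: for every node index `i`,
`∫₀¹ r u_i(r)² dr ≤ ((1+Θ)/Θ)(‖u_s‖²_{L²_r(Q)} + ‖∂_θ u_s‖²_{L²_r(Q)})`,
where `∂_θ u_s(r,θ) = Σ_j u_j(r) e_j′(θ)` outside the partition nodes.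
Here `0 = t 0 < t 1 < ⋯ < t (N-1) = Θ` is the partition and `e j` are the
continuous piecewise linear hat functions with `e i (t j) = δ_{ij}`. -/
theorem stmt4 (Θ : ℝ) (hΘ₀ : 0 < Θ) (hΘ₂ : Θ < 2 * π)
    (N : ℕ) (hN : 2 ≤ N) (t : ℕ → ℝ) (e : ℕ → ℝ → ℝ)
    (ht0 : t 0 = 0) (htN : t (N - 1) = Θ)
    (htmono : ∀ j, j + 1 < N → t j < t (j + 1))
    (hnode : ∀ i < N, ∀ j < N, e i (t j) = if i = j then 1 else 0)
    (hlin : ∀ i < N, ∀ j, j + 1 < N → ∀ x ∈ Icc (t j) (t (j + 1)),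
      e i x = e i (t j) + (e i (t (j + 1)) - e i (t j)) * (x - t j) / (t (j + 1) - t j))
    (u : ℕ → ℝ → ℝ) (hu : ∀ j < N, ContinuousOn (u j) (Icc (0:ℝ) 1))
    (us : ℝ × ℝ → ℝ) (hus : ∀ p, us p = ∑ j ∈ Finset.range N, u j p.1 * e j p.2)
    (dus : ℝ × ℝ → ℝ) (hdus : ∀ p, dus p = ∑ j ∈ Finset.range N, u j p.1 * deriv (e j) p.2) :
    ∀ i < N,
      (∫⁻ r in Ioo (0:ℝ) 1, ENNReal.ofReal (r * (u i r) ^ 2))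
        ≤ ENNReal.ofReal ((1 + Θ) / Θ) * (wL2r Θ us + wL2r Θ dus) := by
  intro i hi
  classical
  have hnodes : volume (t '' (Iio N)) = 0 :=
    Set.Finite.measure_zero ((Set.finite_Iio N).image t) volume
  set ut : ℕ → ℝ → ℝ := fun j r => u j (max 0 (min 1 r)) with hut_def
  have hutc : ∀ j < N, Continuous (ut j) := by
    intro j hj
    have hclamp : Continuous fun r : ℝ => max 0 (min 1 r) :=
      continuous_const.max (continuous_const.min continuous_id)
    refine (hu j hj).comp_continuous hclamp fun x => ?_
    exact ⟨le_max_left _ _, max_le zero_le_one (min_le_left _ _)⟩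
  set E : ℕ → ℝ → ℝ := fun j θ => ∑ k ∈ Finset.range (N - 1),
    (Ioo (t k) (t (k + 1))).indicator
      (fun _ => (e j (t (k + 1)) - e j (t k)) / (t (k + 1) - t k)) θ with hE_def
  have hEmeas : ∀ j, Measurable (E j) := fun j =>
    Finset.measurable_sum _ fun k _ =>
      Measurable.indicator measurable_const measurableSet_Ioo
  set G : ℝ × ℝ → ℝ := fun p => ∑ j ∈ Finset.range N, ut j p.1 * E j p.2 with hG_def
  have hGmeas : Measurable G :=
    Finset.measurable_sum _ fun j hj =>
      ((hutc j (Finset.mem_range.mp hj)).measurable.comp measurable_fst).mul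
        ((hEmeas j).comp measurable_snd)
  have hderivE : ∀ θ ∈ Ioo (0:ℝ) Θ, θ ∉ t '' (Iio N) → ∀ j < N,
      deriv (e j) θ = E j θ := by
    intro θ hθ hn j hj
    obtain ⟨k, hk, h1, h2⟩ := piece_exists N t hN θ (by rw [ht0]; exact hθ.1.le)
      (by rw [htN]; exact hθ.2)
    have hθk : t k < θ := lt_of_le_of_ne h1 fun h => hn ⟨k, mem_Iio.mpr (by omega), h⟩
    have haff := affine_hasDerivAt (e j (t k)) (e j (t (k + 1)) - e j (t k)) (t k)
      (t (k + 1) - t k) θ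
    have hev : e j =ᶠ[nhds θ] (fun y => e j (t k) +
        (e j (t (k + 1)) - e j (t k)) * (y - t k) / (t (k + 1) - t k)) := by
      filter_upwards [Ioo_mem_nhds hθk h2] with y hy
      exact hlin j hj k (by omega) y ⟨hy.1.le, hy.2.le⟩
    rw [(haff.congr_of_eventuallyEq hev).deriv]
    have hEval : E j θ = (e j (t (k + 1)) - e j (t k)) / (t (k + 1) - t k) := by
      show (∑ m ∈ Finset.range (N - 1), (Ioo (t m) (t (m + 1))).indicator
        (fun _ => (e j (t (m + 1)) - e j (t m)) / (t (m + 1) - t m)) θ) = _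
      rw [Finset.sum_eq_single k]
      · exact indicator_of_mem (show θ ∈ Ioo (t k) (t (k + 1)) from ⟨hθk, h2⟩) _
      · intro m hm hne
        have hmlt := Finset.mem_range.mp hm
        refine indicator_of_notMem (fun hmem => ?_) _
        exact piece_disj N t hN htmono k hk θ h1 h2 m (by omega) hne
          (Ioo_subset_Ico_self hmem)
      · intro h
        exact absurd (Finset.mem_range.mpr (by omega)) h
    rw [hEval]
  have hdusG : ∀ r ∈ Ioo (0:ℝ) 1, ∀ θ, θ ∈ Ioo (0:ℝ) Θ → θ ∉ t '' (Iio N) →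
      dus (r, θ) = G (r, θ) := by
    intro r hr θ hθ hn
    rw [hdus]
    show ∑ j ∈ Finset.range N, u j r * deriv (e j) θ = ∑ j ∈ Finset.range N, ut j r * E j θ
    refine Finset.sum_congr rfl fun j hj => ?_
    have hjN := Finset.mem_range.mp hj
    rw [hderivE θ hθ hn j hjN]
    congr 1
    show u j r = u j (max 0 (min 1 r))
    rw [min_eq_right hr.2.le, max_eq_right hr.1.le]
  have hBmeas : Measurable fun r => ∫⁻ θ in Ioo (0:ℝ) Θ,
      ENNReal.ofReal (G (r, θ) ^ 2 * r) := by
    have h1 : Measurable fun p : ℝ × ℝ => ENNReal.ofReal (G p ^ 2 * p.1) :=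
      ((hGmeas.pow_const 2).mul measurable_fst).ennreal_ofReal
    exact h1.lintegral_prod_right'
  have hBae : AEMeasurable (fun r => ∫⁻ θ in Ioo (0:ℝ) Θ,
      ENNReal.ofReal (dus (r, θ) ^ 2 * r)) (volume.restrict (Ioo (0:ℝ) 1)) := by
    refine hBmeas.aemeasurable.congr ?_
    refine (ae_restrict_iff' measurableSet_Ioo).mpr (Filter.Eventually.of_forall ?_)
    intro r hr
    refine lintegral_congr_ae ?_
    filter_upwards [ae_restrict_of_ae (measure_eq_zero_iff_ae_notMem.mp hnodes),
      ae_restrict_mem measurableSet_Ioo] with θ h1 h2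
    rw [hdusG r hr θ h2 h1]
  calc (∫⁻ r in Ioo (0:ℝ) 1, ENNReal.ofReal (r * u i r ^ 2))
      ≤ ∫⁻ r in Ioo (0:ℝ) 1, ENNReal.ofReal ((1 + Θ) / Θ) *
          ((∫⁻ θ in Ioo (0:ℝ) Θ, ENNReal.ofReal (us (r, θ) ^ 2 * r)) +
            ∫⁻ θ in Ioo (0:ℝ) Θ, ENNReal.ofReal (dus (r, θ) ^ 2 * r)) := by
        refine lintegral_mono_ae ((ae_restrict_iff' measurableSet_Ioo).mpr
          (Filter.Eventually.of_forall fun r hr => ?_))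
        exact fixedr hΘ₀ hN ht0 htN htmono hnode hlin (fun j => u j r) r hr.1.le i hi
          (fun θ => us (r, θ)) (fun θ => dus (r, θ)) (fun θ => hus (r, θ))
          (fun θ => hdus (r, θ))
    _ = ENNReal.ofReal ((1 + Θ) / Θ) * ∫⁻ r in Ioo (0:ℝ) 1,
          ((∫⁻ θ in Ioo (0:ℝ) Θ, ENNReal.ofReal (us (r, θ) ^ 2 * r)) +
            ∫⁻ θ in Ioo (0:ℝ) Θ, ENNReal.ofReal (dus (r, θ) ^ 2 * r)) :=
        lintegral_const_mul' _ _ ENNReal.ofReal_ne_top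
    _ = ENNReal.ofReal ((1 + Θ) / Θ) *
          ((∫⁻ r in Ioo (0:ℝ) 1, ∫⁻ θ in Ioo (0:ℝ) Θ, ENNReal.ofReal (us (r, θ) ^ 2 * r)) +
            ∫⁻ r in Ioo (0:ℝ) 1, ∫⁻ θ in Ioo (0:ℝ) Θ,
              ENNReal.ofReal (dus (r, θ) ^ 2 * r)) := by
        rw [lintegral_add_right' _ hBae]
    _ = ENNReal.ofReal ((1 + Θ) / Θ) * (wL2r Θ us + wL2r Θ dus) := rfl
end

section
/- For every continuously differentiable function u on [0,1] × [0,Θ], the piecewise linear interpolant Πu satisfies the stability bound ‖∂_θ Πu‖²_{L²_{1/r}(Q)} ≤ ‖∂_θ u‖²_{L²_{1/r}(Q)}, where ∂_θ Πu is the (piecewise constant in θ) derivative Σ_{i=1}^N u(r,θ_i) e_i′(θ) defined for θ outside the partition nodes, and the inequality holds in [0,∞]. -/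
open MeasureTheory Set Real

/-- Squared weighted norm `‖v‖²_{L²_{1/r}(Q)} = ∫₀¹ ∫₀^Θ v(r,θ)² (1/r) dθ dr`. -/
noncomputable def wL2invr (Θ : ℝ) (v : ℝ × ℝ → ℝ) : ENNReal :=
  ∫⁻ r in Ioo (0:ℝ) 1, ∫⁻ θ in Ioo (0:ℝ) Θ, ENNReal.ofReal ((v (r, θ)) ^ 2 / r)

/-- Partial derivative with respect to the second (angular) variable. -/
noncomputable def pd2 (u : ℝ × ℝ → ℝ) (p : ℝ × ℝ) : ℝ := deriv (fun t => u (p.1, t)) p.2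

lemma my_cs {a b : ℝ} (hab : a < b) {g : ℝ → ℝ} (hg : ContinuousOn g (Icc a b)) :
    (∫ x in a..b, g x) ^ 2 ≤ (b - a) * ∫ x in a..b, (g x) ^ 2 := by
  set A := ∫ x in a..b, g x with hA
  set c : ℝ := A / (b - a) with hc
  have hgi : IntervalIntegrable g volume a b := by
    apply ContinuousOn.intervalIntegrable; rwa [uIcc_of_le hab.le]
  have hg2i : IntervalIntegrable (fun x => (g x) ^ 2) volume a b := by
    apply ContinuousOn.intervalIntegrable
    rw [uIcc_of_le hab.le]; exact (hg.pow 2)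
  have key : (0:ℝ) ≤ ∫ x in a..b, (g x - c) ^ 2 :=
    intervalIntegral.integral_nonneg hab.le (fun x _ => sq_nonneg _)
  have expand : ∫ x in a..b, (g x - c) ^ 2
      = (∫ x in a..b, (g x) ^ 2) - 2 * c * A + (b - a) * c ^ 2 := by
    have h1 : ∀ x, (g x - c) ^ 2 = (g x) ^ 2 - (2 * c) * g x + c ^ 2 := by intro x; ring
    simp_rw [h1]
    rw [intervalIntegral.integral_add ((hg2i.sub (hgi.const_mul _))) intervalIntegrable_const,
        intervalIntegral.integral_sub hg2i (hgi.const_mul _),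
        intervalIntegral.integral_const_mul, intervalIntegral.integral_const]
    rw [smul_eq_mul]
  rw [expand] at key
  have hba : (0:ℝ) < b - a := by linarith
  have h1 : (b - a) * c ^ 2 = A ^ 2 / (b - a) := by rw [hc]; field_simp
  have h2 : 2 * c * A = 2 * A ^ 2 / (b - a) := by rw [hc]; field_simp
  rw [h1, h2] at key
  have h3 : 2 * A ^ 2 / (b - a) = 2 * (A ^ 2 / (b - a)) := by ring
  have hk : A ^ 2 / (b - a) ≤ ∫ x in a..b, (g x) ^ 2 := by rw [h3] at key; linarith
  calc A ^ 2 = (b - a) * (A ^ 2 / (b - a)) := by field_simp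
    _ ≤ (b - a) * ∫ x in a..b, (g x) ^ 2 := mul_le_mul_of_nonneg_left hk hba.le

lemma my_deriv_affine {f : ℝ → ℝ} {a b : ℝ}
    (hf : ∀ x ∈ Icc a b, f x = f a + (f b - f a) * (x - a) / (b - a))
    {θ : ℝ} (hθ : θ ∈ Ioo a b) : deriv f θ = (f b - f a) / (b - a) := by
  have heq : f =ᶠ[nhds θ] fun x => f a + (f b - f a) * (x - a) / (b - a) := by
    filter_upwards [isOpen_Ioo.mem_nhds hθ] with x hx
    exact hf x (Ioo_subset_Icc_self hx)
  rw [heq.deriv_eq]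
  have h : HasDerivAt (fun x => f a + (f b - f a) * (x - a) / (b - a))
      ((f b - f a) / (b - a)) θ := by
    have h1 := (((hasDerivAt_id θ).sub_const a).const_mul (f b - f a)).div_const (b - a)
    simpa using h1.const_add (f a)
  exact h.deriv


/-- Stability of the interpolant in the angular seminorm: for `u`
continuously differentiable on `[0,1] × [0,Θ]`,
`‖∂_θ Πu‖²_{L²_{1/r}(Q)} ≤ ‖∂_θ u‖²_{L²_{1/r}(Q)}` in `[0,∞]`, where
`∂_θ Πu (r,θ) = Σ_i u(r,θ_i) e_i′(θ)` is defined for `θ` outside the partition nodes. -/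
theorem stmt6 (Θ : ℝ) (hΘ₀ : 0 < Θ) (hΘ₂ : Θ < 2 * π)
    (N : ℕ) (hN : 2 ≤ N) (t : ℕ → ℝ) (e : ℕ → ℝ → ℝ)
    (ht0 : t 0 = 0) (htN : t (N - 1) = Θ)
    (htmono : ∀ j, j + 1 < N → t j < t (j + 1))
    (hnode : ∀ i < N, ∀ j < N, e i (t j) = if i = j then 1 else 0)
    (hlin : ∀ i < N, ∀ j, j + 1 < N → ∀ x ∈ Icc (t j) (t (j + 1)),
      e i x = e i (t j) + (e i (t (j + 1)) - e i (t j)) * (x - t j) / (t (j + 1) - t j))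
    (u : ℝ × ℝ → ℝ) (hu : ContDiffOn ℝ 1 u (Icc (0:ℝ) 1 ×ˢ Icc (0:ℝ) Θ))
    (dPiu : ℝ × ℝ → ℝ)
    (hdPiu : ∀ p, dPiu p = ∑ i ∈ Finset.range N, u (p.1, t i) * deriv (e i) p.2) :
    wL2invr Θ dPiu ≤ wL2invr Θ (pd2 u) := by
  set R : Set (ℝ × ℝ) := Icc (0:ℝ) 1 ×ˢ Icc (0:ℝ) Θ with hRdef
  have hR : UniqueDiffOn ℝ R := (uniqueDiffOn_Icc one_pos).prod (uniqueDiffOn_Icc hΘ₀)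
  set G : ℝ × ℝ → ℝ := fun p => (fderivWithin ℝ u R p) (0, 1) with hGdef
  have hGc : ContinuousOn G R :=
    (hu.continuousOn_fderivWithin hR le_rfl).clm_apply continuousOn_const
  -- monotonicity of nodes
  have hmono : ∀ k, k < N → ∀ i ≤ k, t i ≤ t k := by
    intro k hk
    induction k with
    | zero => intro i hi; simp [Nat.le_zero.mp hi]
    | succ n ih =>
      intro i hi
      rcases Nat.eq_or_lt_of_le hi with h | h
      · rw [h]
      · exact (ih (by omega) i (by omega)).trans (htmono n hk).le
  have hdAt : ∀ r ∈ Ioo (0:ℝ) 1, ∀ θ ∈ Ioo (0:ℝ) Θ,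
      HasDerivAt (fun s => u (r, s)) (G (r, θ)) θ := by
    intro r hr θ hθ
    have hmemR : (r, θ) ∈ R := ⟨⟨hr.1.le, hr.2.le⟩, ⟨hθ.1.le, hθ.2.le⟩⟩
    have hnhds : R ∈ nhds (r, θ) := by
      apply Filter.mem_of_superset ((isOpen_Ioo.prod isOpen_Ioo).mem_nhds ⟨hr, hθ⟩)
      exact prod_mono Ioo_subset_Icc_self Ioo_subset_Icc_self
    have hdiff : DifferentiableAt ℝ u (r, θ) :=
      ((hu.differentiableOn one_ne_zero) (r, θ) hmemR).differentiableAt hnhds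
    have hcurve : HasDerivAt (fun s => ((r, s) : ℝ × ℝ)) ((0:ℝ), (1:ℝ)) θ :=
      (hasDerivAt_const θ r).prodMk (hasDerivAt_id θ)
    have h := hdiff.hasFDerivAt.comp_hasDerivAt θ hcurve
    have hfw : fderivWithin ℝ u R (r, θ) = fderiv ℝ u (r, θ) := fderivWithin_of_mem_nhds hnhds
    rw [show G (r, θ) = fderiv ℝ u (r, θ) (0, 1) by simp [hGdef, hfw]]; exact h
  have hpd2 : ∀ r ∈ Ioo (0:ℝ) 1, ∀ θ ∈ Ioo (0:ℝ) Θ, pd2 u (r, θ) = G (r, θ) :=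
    fun r hr θ hθ => (hdAt r hr θ hθ).deriv
  have hdPc : ∀ (r : ℝ), ∀ j, j + 1 < N → ∀ θ ∈ Ioo (t j) (t (j + 1)),
      dPiu (r, θ) = (u (r, t (j + 1)) - u (r, t j)) / (t (j + 1) - t j) := by
    intro r j hj θ hθ
    rw [hdPiu]
    have hstep : ∀ i ∈ Finset.range N,
        u ((r, θ).1, t i) * deriv (e i) (r, θ).2
          = (if i = j + 1 then u (r, t i) / (t (j + 1) - t j) else 0)
            - (if i = j then u (r, t i) / (t (j + 1) - t j) else 0) := by
      intro i hi
      have hi' := Finset.mem_range.mp hi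
      rw [show ((r, θ).1 : ℝ) = r from rfl, show ((r, θ).2 : ℝ) = θ from rfl,
        my_deriv_affine (hlin i hi' j hj) hθ, hnode i hi' (j+1) hj, hnode i hi' j (by omega)]
      split_ifs with h1 h2 <;> [omega; skip; skip; skip] <;> ring
    rw [Finset.sum_congr rfl hstep, Finset.sum_sub_distrib,
      Finset.sum_ite_eq' (Finset.range N) (j+1) (fun i => u (r, t i) / (t (j + 1) - t j)),
      Finset.sum_ite_eq' (Finset.range N) j (fun i => u (r, t i) / (t (j + 1) - t j))]
    simp only [Finset.mem_range, hj, if_true, show j < N by omega]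
    rw [← sub_div]
  have hpiece : ∀ r ∈ Ioo (0:ℝ) 1, ∀ j, j + 1 < N →
      (∫⁻ θ in Ioo (t j) (t (j+1)), ENNReal.ofReal ((dPiu (r, θ))^2 / r))
        ≤ ∫⁻ θ in Ioo (t j) (t (j+1)), ENNReal.ofReal ((pd2 u (r, θ))^2 / r) := by
    intro r hr j hj
    set a := t j with hadef
    set b := t (j+1) with hbdef
    have hab : a < b := htmono j hj
    have hba : (0:ℝ) < b - a := by linarith
    have ha0 : (0:ℝ) ≤ a := ht0 ▸ hmono j (by omega) 0 (by omega)
    have hbΘ : b ≤ Θ := htN ▸ hmono (N-1) (by omega) (j+1) (by omega)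
    have hsub : Ioo a b ⊆ Ioo 0 Θ := fun x hx =>
      ⟨lt_of_le_of_lt ha0 hx.1, lt_of_lt_of_le hx.2 hbΘ⟩
    have hIccsub : Icc a b ⊆ Icc 0 Θ := Icc_subset_Icc ha0 hbΘ
    have hr0 : (0:ℝ) < r := hr.1
    have hmaps : ∀ x ∈ Icc (0:ℝ) Θ, ((r, x) : ℝ × ℝ) ∈ R :=
      fun x hx => ⟨⟨hr.1.le, hr.2.le⟩, hx⟩
    have hcontu : ContinuousOn (fun s => u (r, s)) (Icc 0 Θ) :=
      hu.continuousOn.comp (continuous_const.prodMk continuous_id).continuousOn hmaps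
    have hcontG : ContinuousOn (fun s => G (r, s)) (Icc 0 Θ) :=
      hGc.comp (continuous_const.prodMk continuous_id).continuousOn hmaps
    have hftc : ∫ x in a..b, G (r, x) = u (r, b) - u (r, a) :=
      intervalIntegral.integral_eq_sub_of_hasDeriv_right_of_le hab.le (hcontu.mono hIccsub)
        (fun x hx => (hdAt r hr x (hsub hx)).hasDerivWithinAt)
        (by apply ContinuousOn.intervalIntegrable
            rw [uIcc_of_le hab.le]; exact hcontG.mono hIccsub)
    have hcs := my_cs hab (hcontG.mono hIccsub)
    rw [hftc] at hcs
    set Δ := u (r, b) - u (r, a) with hΔdef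
    have hL : (∫⁻ θ in Ioo a b, ENNReal.ofReal ((dPiu (r, θ))^2 / r))
        = ENNReal.ofReal ((Δ / (b - a))^2 / r * (b - a)) := by
      rw [setLIntegral_congr_fun measurableSet_Ioo
        (fun θ hθ => by rw [hdPc r j hj θ hθ])]
      rw [setLIntegral_const, Real.volume_Ioo, ← ENNReal.ofReal_mul (by positivity)]
    have hInt : IntegrableOn (fun θ => (G (r, θ))^2 / r) (Ioo a b) volume := by
      have hc2 : ContinuousOn (fun θ => (G (r, θ))^2 / r) (Icc a b) :=
        ((hcontG.mono hIccsub).pow 2).div_const r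
      have h3 : IntegrableOn (fun θ => (G (r, θ))^2 / r) (Icc a b) volume :=
        hc2.integrableOn_Icc
      exact h3.mono_set Ioo_subset_Icc_self
    have hRe : (∫⁻ θ in Ioo a b, ENNReal.ofReal ((pd2 u (r, θ))^2 / r))
        = ENNReal.ofReal (∫ θ in Ioo a b, (G (r, θ))^2 / r) := by
      rw [setLIntegral_congr_fun measurableSet_Ioo
        (fun θ hθ => by rw [hpd2 r hr θ (hsub hθ)])]
      rw [← ofReal_integral_eq_lintegral_ofReal hInt (ae_of_all _ fun θ => by positivity)]
    have hset : (∫ θ in Ioo a b, (G (r, θ))^2 / r) = (∫ x in a..b, (G (r, x))^2) / r := by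
      rw [integral_div, intervalIntegral.integral_of_le hab.le, integral_Ioc_eq_integral_Ioo]
    rw [hL, hRe, hset]
    apply ENNReal.ofReal_le_ofReal
    have h1 : (Δ / (b - a))^2 / r * (b - a) = (Δ^2 / (b - a)) / r := by
      field_simp
    rw [h1]
    gcongr
    rw [div_le_iff₀ hba]
    linarith [hcs]
  -- decomposition of (0, Θ) into subintervals
  set S : Set ℝ := ⋃ j ∈ Finset.range (N-1), Ioo (t j) (t (j+1)) with hSdef
  have hSsub : S ⊆ Ioo 0 Θ := by
    intro x hx
    rw [hSdef, mem_iUnion₂] at hx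
    obtain ⟨j, hj, hx⟩ := hx
    rw [Finset.mem_range] at hj
    have ha0 : (0:ℝ) ≤ t j := ht0 ▸ hmono j (by omega) 0 (by omega)
    have hbΘ : t (j+1) ≤ Θ := htN ▸ hmono (N-1) (by omega) (j+1) (by omega)
    exact ⟨lt_of_le_of_lt ha0 hx.1, lt_of_lt_of_le hx.2 hbΘ⟩
  have hcover : Ioo (0:ℝ) Θ \ S ⊆ t '' (Iio N) := by
    intro θ hθ
    obtain ⟨hθI, hθS⟩ := hθ
    set P := (Finset.range N).filter (fun k => t k < θ) with hPdef
    have h0P : (0:ℕ) ∈ P := Finset.mem_filter.mpr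
      ⟨Finset.mem_range.mpr (by omega), by rw [ht0]; exact hθI.1⟩
    have hPne : P.Nonempty := ⟨0, h0P⟩
    set j := P.max' hPne with hjdef
    have hjP : j ∈ P := P.max'_mem hPne
    have hjN : j < N := Finset.mem_range.mp (Finset.mem_filter.mp hjP).1
    have hjθ : t j < θ := (Finset.mem_filter.mp hjP).2
    have hjne : j ≠ N - 1 := by
      intro h; rw [h, htN] at hjθ; exact absurd hθI.2 (not_lt.mpr hjθ.le)
    have hj1 : j + 1 < N := by omega
    have hle : θ ≤ t (j+1) := by
      by_contra h
      push_neg at h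
      have hmem : j + 1 ∈ P := Finset.mem_filter.mpr ⟨Finset.mem_range.mpr hj1, h⟩
      have := P.le_max' _ hmem
      omega
    have heq : θ = t (j+1) := by
      rcases eq_or_lt_of_le hle with h | h
      · exact h
      · refine absurd (show θ ∈ S from ?_) hθS
        rw [hSdef]
        exact mem_iUnion₂.mpr ⟨j, Finset.mem_range.mpr (by omega), ⟨hjθ, h⟩⟩
    exact ⟨j+1, by simp only [mem_Iio]; omega, heq.symm⟩
  have hae : S =ᵐ[volume] Ioo (0:ℝ) Θ := by
    rw [MeasureTheory.ae_eq_set]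
    constructor
    · rw [Set.diff_eq_empty.mpr hSsub]; exact measure_empty
    · exact measure_mono_null hcover (((Set.finite_Iio N).image t).measure_zero volume)
  have hdisj : (↑(Finset.range (N-1)) : Set ℕ).PairwiseDisjoint
      (fun j => Ioo (t j) (t (j+1))) := by
    have key : ∀ j k, j < k → k < N - 1 →
        Disjoint (Ioo (t j) (t (j+1))) (Ioo (t k) (t (k+1))) := by
      intro j k hjk hk
      rw [Set.Ioo_disjoint_Ioo]
      exact min_le_of_left_le ((hmono k (by omega) (j+1) (by omega)).trans (le_max_right _ _))
    intro j hj k hk hjk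
    simp only [Finset.coe_range, mem_Iio] at hj hk
    rcases lt_or_gt_of_ne hjk with h | h
    · exact key j k h hk
    · exact (key k j h hj).symm
  unfold wL2invr
  apply lintegral_mono_ae
  rw [ae_restrict_iff' measurableSet_Ioo]
  apply ae_of_all
  intro r hr
  calc (∫⁻ θ in Ioo (0:ℝ) Θ, ENNReal.ofReal ((dPiu (r, θ))^2 / r))
      = ∫⁻ θ in S, ENNReal.ofReal ((dPiu (r, θ))^2 / r) := (setLIntegral_congr hae).symm
    _ = ∑ j ∈ Finset.range (N-1), ∫⁻ θ in Ioo (t j) (t (j+1)),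
          ENNReal.ofReal ((dPiu (r, θ))^2 / r) :=
        lintegral_biUnion_finset hdisj (fun j _ => measurableSet_Ioo) _
    _ ≤ ∑ j ∈ Finset.range (N-1), ∫⁻ θ in Ioo (t j) (t (j+1)),
          ENNReal.ofReal ((pd2 u (r, θ))^2 / r) :=
        Finset.sum_le_sum (fun j hj => hpiece r hr j (by
          have := Finset.mem_range.mp hj; omega))
    _ = ∫⁻ θ in S, ENNReal.ofReal ((pd2 u (r, θ))^2 / r) :=
        (lintegral_biUnion_finset hdisj (fun j _ => measurableSet_Ioo) _).symm
    _ = ∫⁻ θ in Ioo (0:ℝ) Θ, ENNReal.ofReal ((pd2 u (r, θ))^2 / r) := setLIntegral_congr hae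
end

section
/- For every twice continuously differentiable function u on [0,1] × [0,Θ], the mixed derivative of the interpolant, ∂_{rθ} Πu(r,θ) = Σ_{i=1}^N ∂_r u(r,θ_i) e_i′(θ) (defined for θ outside the partition nodes), satisfies ‖∂_{rθ} Πu‖²_{L²_r(Q)} ≤ ‖∂_{rθ} u‖²_{L²_r(Q)}. -/
open MeasureTheory Set Real Topology


private lemma t_le_aux (t : ℕ → ℝ) {n : ℕ} (h : ∀ i, i < n → t i ≤ t (i+1)) :
    ∀ j k, j ≤ k → k ≤ n → t j ≤ t k := by
  intro j k hjk hkn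
  induction k with
  | zero => obtain rfl : j = 0 := Nat.le_zero.mp hjk; exact le_rfl
  | succ m ih =>
    rcases Nat.lt_succ_iff_lt_or_eq.mp (Nat.lt_succ_of_le hjk) with h' | rfl
    · exact (ih (by omega) (by omega)).trans (h m (by omega))
    · exact le_rfl

private lemma sum_Ioc_lintegral (ψ : ℝ → ENNReal) (t : ℕ → ℝ) :
    ∀ n : ℕ, (∀ j, j < n → t j ≤ t (j+1)) →
    ∑ j ∈ Finset.range n, ∫⁻ x in Ioc (t j) (t (j+1)), ψ x
      = ∫⁻ x in Ioc (t 0) (t n), ψ x := by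
  intro n
  induction n with
  | zero => simp
  | succ k ih =>
    intro h
    rw [Finset.sum_range_succ, ih (fun j hj => h j (by omega))]
    rw [← lintegral_union measurableSet_Ioc
        (Set.Ioc_disjoint_Ioc.mpr ((min_le_left _ _).trans (le_max_right _ _))),
      Set.Ioc_union_Ioc_eq_Ioc (t_le_aux t h 0 k (by omega) (by omega)) (h k (by omega))]

/-- Partial derivative with respect to the first (radial) variable. -/
noncomputable def pd1 (u : ℝ × ℝ → ℝ) (p : ℝ × ℝ) : ℝ := deriv (fun s => u (s, p.2)) p.1

/-- Stability of the mixed derivative of the interpolant: for `u`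
twice continuously differentiable on `[0,1] × [0,Θ]`,
`‖∂_{rθ} Πu‖²_{L²_r(Q)} ≤ ‖∂_{rθ} u‖²_{L²_r(Q)}`, where
`∂_{rθ} Πu (r,θ) = Σ_i ∂_r u(r,θ_i) e_i′(θ)` is defined for `θ` outside the nodes. -/
theorem stmt7 (Θ : ℝ) (hΘ₀ : 0 < Θ) (hΘ₂ : Θ < 2 * π)
    (N : ℕ) (hN : 2 ≤ N) (t : ℕ → ℝ) (e : ℕ → ℝ → ℝ)
    (ht0 : t 0 = 0) (htN : t (N - 1) = Θ)
    (htmono : ∀ j, j + 1 < N → t j < t (j + 1))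
    (hnode : ∀ i < N, ∀ j < N, e i (t j) = if i = j then 1 else 0)
    (hlin : ∀ i < N, ∀ j, j + 1 < N → ∀ x ∈ Icc (t j) (t (j + 1)),
      e i x = e i (t j) + (e i (t (j + 1)) - e i (t j)) * (x - t j) / (t (j + 1) - t j))
    (u : ℝ × ℝ → ℝ) (hu : ContDiffOn ℝ 2 u (Icc (0:ℝ) 1 ×ˢ Icc (0:ℝ) Θ))
    (dPiu : ℝ × ℝ → ℝ)
    (hdPiu : ∀ p, dPiu p
      = ∑ i ∈ Finset.range N, (deriv (fun s => u (s, t i)) p.1) * deriv (e i) p.2) :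
    wL2r Θ dPiu ≤ wL2r Θ (pd2 (pd1 u)) := by
  -- setup: second derivatives within the box
  set box : Set (ℝ × ℝ) := Icc (0:ℝ) 1 ×ˢ Icc (0:ℝ) Θ with hboxdef
  have hbox_ud : UniqueDiffOn ℝ box :=
    (uniqueDiffOn_Icc one_pos).prod (uniqueDiffOn_Icc hΘ₀)
  set φ : ℝ × ℝ → ℝ := fun p => fderivWithin ℝ u box p (1, 0) with hφdef
  have hφ : ContDiffOn ℝ 1 φ box := by
    have h1 : ContDiffOn ℝ 1 (fun p => fderivWithin ℝ u box p) box :=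
      hu.fderivWithin hbox_ud (by norm_num)
    exact h1.clm_apply contDiffOn_const
  set G : ℝ × ℝ → ℝ := fun p => fderivWithin ℝ φ box p (0, 1) with hGdef
  have hG : ContinuousOn G box := by
    have h1 : ContinuousOn (fun p => fderivWithin ℝ φ box p) box :=
      hφ.continuousOn_fderivWithin hbox_ud le_rfl
    exact h1.clm_apply continuousOn_const
  -- partition facts
  have hstep' : ∀ j, j < N - 1 → t j ≤ t (j+1) := fun j hj => (htmono j (by omega)).le
  have hmono : ∀ j k, j ≤ k → k ≤ N - 1 → t j ≤ t k := t_le_aux t hstep'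
  have ht0' : ∀ j, j ≤ N - 1 → 0 ≤ t j := fun j hj => ht0 ▸ hmono 0 j (Nat.zero_le _) hj
  have htΘ : ∀ j, j ≤ N - 1 → t j ≤ Θ := fun j hj => htN ▸ hmono j (N-1) hj le_rfl
  -- inner inequality for fixed r
  have key : ∀ r ∈ Ioo (0:ℝ) 1,
      (∫⁻ θ in Ioo (0:ℝ) Θ, ENNReal.ofReal ((dPiu (r, θ))^2))
        ≤ ∫⁻ θ in Ioo (0:ℝ) Θ, ENNReal.ofReal ((pd2 (pd1 u) (r, θ))^2) := by
    intro r hr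
    have hA : ∀ θ' ∈ Icc (0:ℝ) Θ, deriv (fun s => u (s, θ')) r = φ (r, θ') := by
      intro θ' hθ'
      have hmem : ((r, θ') : ℝ × ℝ) ∈ box := ⟨Ioo_subset_Icc_self hr, hθ'⟩
      have hdu : HasFDerivWithinAt u (fderivWithin ℝ u box (r, θ')) box (r, θ') :=
        ((hu.differentiableOn (by norm_num)) _ hmem).hasFDerivWithinAt
      have hg : HasDerivWithinAt (fun s : ℝ => (s, θ')) ((1:ℝ), (0:ℝ)) (Icc 0 1) r :=
        (HasDerivAt.prodMk (hasDerivAt_id' r) (hasDerivAt_const r θ')).hasDerivWithinAt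
      have hcomp : HasDerivWithinAt (fun s => u (s, θ'))
          ((fderivWithin ℝ u box (r, θ')) ((1:ℝ), (0:ℝ))) (Icc 0 1) r :=
        hdu.comp_hasDerivWithinAt r hg (fun s (hs : s ∈ Icc (0:ℝ) 1) => (show (s, θ') ∈ box from ⟨hs, hθ'⟩))
      exact (hcomp.hasDerivAt (Icc_mem_nhds hr.1 hr.2)).deriv
    have hB : ∀ θ ∈ Ioo (0:ℝ) Θ, HasDerivAt (fun θ' => φ (r, θ')) (G (r, θ)) θ := by
      intro θ hθ
      have hmem : ((r, θ) : ℝ × ℝ) ∈ box := ⟨Ioo_subset_Icc_self hr, Ioo_subset_Icc_self hθ⟩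
      have hnb : box ∈ 𝓝 ((r, θ) : ℝ × ℝ) :=
        prod_mem_nhds (Icc_mem_nhds hr.1 hr.2) (Icc_mem_nhds hθ.1 hθ.2)
      have hdφ : HasFDerivAt φ (fderivWithin ℝ φ box (r, θ)) (r, θ) :=
        (((hφ.differentiableOn (by norm_num)) _ hmem).hasFDerivWithinAt).hasFDerivAt hnb
      have hg : HasDerivAt (fun θ' : ℝ => ((r, θ') : ℝ × ℝ)) ((0:ℝ), (1:ℝ)) θ :=
        HasDerivAt.prodMk (hasDerivAt_const θ r) (hasDerivAt_id' θ)
      exact hdφ.comp_hasDerivAt θ hg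
    have hC : ∀ θ ∈ Ioo (0:ℝ) Θ, pd2 (pd1 u) (r, θ) = G (r, θ) := by
      intro θ hθ
      have hev : (fun θ' => pd1 u (r, θ')) =ᶠ[𝓝 θ] fun θ' => φ (r, θ') :=
        Filter.eventuallyEq_of_mem (Ioo_mem_nhds hθ.1 hθ.2)
          (fun x hx => hA x (Ioo_subset_Icc_self hx))
      show deriv (fun θ' => pd1 u (r, θ')) θ = G (r, θ)
      rw [hev.deriv_eq]
      exact (hB θ hθ).deriv
    have hφr : ContinuousOn (fun θ' => φ (r, θ')) (Icc 0 Θ) :=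
      hφ.continuousOn.comp (Continuous.continuousOn (continuous_const.prodMk continuous_id))
        (fun x hx => ⟨Ioo_subset_Icc_self hr, hx⟩)
    have hGr : ContinuousOn (fun θ' => G (r, θ')) (Icc 0 Θ) :=
      hG.comp (Continuous.continuousOn (continuous_const.prodMk continuous_id))
        (fun x hx => ⟨Ioo_subset_Icc_self hr, hx⟩)
    have perint : ∀ A B : ℝ, A < B → 0 ≤ A → B ≤ Θ →
        ∫ θ in A..B, G (r, θ) = φ (r, B) - φ (r, A) := by
      intro A B hAB h0A hBΘ
      have hsub : Icc A B ⊆ Icc 0 Θ := Icc_subset_Icc h0A hBΘ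
      have hGint : IntervalIntegrable (fun θ' => G (r, θ')) volume A B := by
        apply ContinuousOn.intervalIntegrable
        rw [uIcc_of_le hAB.le]
        exact hGr.mono hsub
      exact intervalIntegral.integral_eq_sub_of_hasDerivAt_of_le hAB.le
        (hφr.mono hsub)
        (fun x hx => hB x ⟨lt_of_le_of_lt h0A hx.1, lt_of_lt_of_le hx.2 hBΘ⟩) hGint
    have CS : ∀ A B : ℝ, A < B → 0 ≤ A → B ≤ Θ →
        (∫ θ in A..B, G (r, θ))^2 ≤ (B - A) * ∫ θ in A..B, (G (r, θ))^2 := by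
      intro A B hAB h0A hBΘ
      have hsub : Icc A B ⊆ Icc 0 Θ := Icc_subset_Icc h0A hBΘ
      have hGc : ContinuousOn (fun θ' => G (r, θ')) (Icc A B) := hGr.mono hsub
      have hGint : IntervalIntegrable (fun θ' => G (r, θ')) volume A B := by
        apply ContinuousOn.intervalIntegrable; rwa [uIcc_of_le hAB.le]
      have hG2int : IntervalIntegrable (fun θ' => (G (r, θ'))^2) volume A B := by
        apply ContinuousOn.intervalIntegrable
        rw [uIcc_of_le hAB.le]; exact hGc.pow 2
      set Iv := ∫ θ in A..B, G (r, θ) with hI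
      set c : ℝ := Iv / (B - A) with hc
      have hnn : 0 ≤ ∫ θ in A..B, (G (r, θ) - c)^2 :=
        intervalIntegral.integral_nonneg hAB.le (fun x _ => sq_nonneg _)
      have hexp : (∫ θ in A..B, (G (r, θ) - c)^2)
          = (∫ θ in A..B, (G (r, θ))^2) - 2 * c * Iv + c^2 * (B - A) := by
        have h1 : (fun θ => (G (r, θ) - c)^2)
            = fun θ => (G (r, θ))^2 - 2 * c * G (r, θ) + c^2 := by
          funext θ; ring
        rw [h1, intervalIntegral.integral_add (hG2int.sub ((hGint.const_mul (2*c))))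
            intervalIntegrable_const,
          intervalIntegral.integral_sub hG2int (hGint.const_mul (2*c)),
          intervalIntegral.integral_const_mul, intervalIntegral.integral_const]
        simp only [smul_eq_mul]
        ring
      rw [hexp] at hnn
      have hBA : (0:ℝ) < B - A := by linarith
      have e1 : 2*c*Iv = 2*(Iv^2/(B-A)) := by rw [hc]; ring
      have e2 : c^2*(B-A) = Iv^2/(B-A) := by
        rw [hc]; field_simp
      rw [e1, e2] at hnn
      have h3 : Iv^2/(B-A) ≤ ∫ θ in A..B, (G (r, θ))^2 := by linarith
      calc Iv^2 = (B-A) * (Iv^2/(B-A)) := by field_simp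
        _ ≤ (B-A) * ∫ θ in A..B, (G (r, θ))^2 := mul_le_mul_of_nonneg_left h3 hBA.le
    -- per subinterval inequality
    have keyj : ∀ j, j + 1 < N →
        (∫⁻ θ in Ioc (t j) (t (j+1)), ENNReal.ofReal ((dPiu (r, θ))^2))
          ≤ ∫⁻ θ in Ioc (t j) (t (j+1)), ENNReal.ofReal ((pd2 (pd1 u) (r, θ))^2) := by
      intro j hj
      set A := t j with hAdef
      set B := t (j+1) with hBdef
      have hAB : A < B := htmono j hj
      have h0A : 0 ≤ A := ht0' j (by omega)
      have hBΘ : B ≤ Θ := htΘ (j+1) (by omega)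
      have hBA : (0:ℝ) < B - A := by linarith
      have hIooSub : Ioo A B ⊆ Ioo 0 Θ :=
        fun x hx => ⟨lt_of_le_of_lt h0A hx.1, lt_of_lt_of_le hx.2 hBΘ⟩
      have hconst : ∀ θ ∈ Ioo A B, dPiu (r, θ)
          = (deriv (fun s => u (s, B)) r - deriv (fun s => u (s, A)) r) / (B - A) := by
        intro θ hθ
        have hderiv : ∀ i, i < N → deriv (e i) θ = (e i B - e i A) / (B - A) := by
          intro i hi
          have hev : (e i) =ᶠ[𝓝 θ] (fun x => e i A + (e i B - e i A) * (x - A) / (B - A)) :=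
            Filter.eventuallyEq_of_mem (Ioo_mem_nhds hθ.1 hθ.2)
              (fun x hx => hlin i hi j hj x (Ioo_subset_Icc_self hx))
          rw [hev.deriv_eq]
          have hder : HasDerivAt (fun x => e i A + (e i B - e i A) * (x - A) / (B - A))
              ((e i B - e i A) / (B - A)) θ := by
            have h := ((((hasDerivAt_id θ).sub_const A).const_mul
              (e i B - e i A)).div_const (B - A)).const_add (e i A)
            simpa using h
          exact hder.deriv
        rw [hdPiu]
        simp only [Prod.fst, Prod.snd]
        calc ∑ i ∈ Finset.range N, deriv (fun s => u (s, t i)) r * deriv (e i) θ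
            = ∑ i ∈ Finset.range N,
                ((if i = j+1 then deriv (fun s => u (s, t i)) r else 0)
                  - (if i = j then deriv (fun s => u (s, t i)) r else 0)) / (B - A) := by
              refine Finset.sum_congr rfl (fun i hi => ?_)
              have hi' := Finset.mem_range.mp hi
              rw [hderiv i hi', hAdef, hBdef, hnode i hi' j (by omega), hnode i hi' (j+1) hj]
              by_cases h1 : i = j+1 <;> by_cases h2 : i = j <;>
                simp [h1, h2, div_eq_mul_inv] <;> ring
          _ = ((∑ i ∈ Finset.range N, if i = j+1 then deriv (fun s => u (s, t i)) r else 0)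
              - ∑ i ∈ Finset.range N, if i = j then deriv (fun s => u (s, t i)) r else 0)
                / (B - A) := by
              rw [← Finset.sum_sub_distrib, ← Finset.sum_div]
          _ = (deriv (fun s => u (s, B)) r - deriv (fun s => u (s, A)) r) / (B - A) := by
              rw [Finset.sum_ite_eq' (Finset.range N) (j+1), Finset.sum_ite_eq' (Finset.range N) j]
              simp [Finset.mem_range.mpr hj, Finset.mem_range.mpr (show j < N by omega),
                hAdef, hBdef]
      have hG2int : IntervalIntegrable (fun θ' => (G (r, θ'))^2) volume A B := by
        apply ContinuousOn.intervalIntegrable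
        rw [uIcc_of_le hAB.le]
        exact (hGr.mono (Icc_subset_Icc h0A hBΘ)).pow 2
      have hIooIoc : ∀ ψ : ℝ → ENNReal, (∫⁻ θ in Ioc A B, ψ θ) = ∫⁻ θ in Ioo A B, ψ θ :=
        fun ψ => (setLIntegral_congr Ioo_ae_eq_Ioc).symm
      rw [hIooIoc, hIooIoc]
      have hL : (∫⁻ θ in Ioo A B, ENNReal.ofReal ((dPiu (r, θ))^2))
          = ENNReal.ofReal
            ((((deriv (fun s => u (s, B)) r - deriv (fun s => u (s, A)) r)/(B-A))^2) * (B - A)) := by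
        rw [setLIntegral_congr_fun measurableSet_Ioo
          (fun θ hθ => by rw [hconst θ hθ])]
        rw [setLIntegral_const, Real.volume_Ioo, ← ENNReal.ofReal_mul (sq_nonneg _)]
      have hR : (∫⁻ θ in Ioo A B, ENNReal.ofReal ((pd2 (pd1 u) (r, θ))^2))
          = ENNReal.ofReal (∫ θ in A..B, (G (r, θ))^2) := by
        rw [setLIntegral_congr_fun measurableSet_Ioo
          (fun θ hθ => by rw [hC θ (hIooSub hθ)])]
        rw [setLIntegral_congr Ioo_ae_eq_Ioc, intervalIntegral.integral_of_le hAB.le,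
          ofReal_integral_eq_lintegral_ofReal hG2int.1 (ae_of_all _ (fun θ => sq_nonneg _))]
      rw [hL, hR]
      apply ENNReal.ofReal_le_ofReal
      have hFTC := perint A B hAB h0A hBΘ
      have hCS := CS A B hAB h0A hBΘ
      have ha : deriv (fun s => u (s, B)) r = φ (r, B) := hA B ⟨le_trans h0A hAB.le, hBΘ⟩
      have hb : deriv (fun s => u (s, A)) r = φ (r, A) := hA A ⟨h0A, le_trans hAB.le hBΘ⟩
      rw [ha, hb, ← hFTC]
      set Iv := ∫ θ in A..B, G (r, θ) with hIv
      have heq : (Iv/(B-A))^2*(B-A) = Iv^2/(B-A) := by field_simp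
      rw [heq, div_le_iff₀ hBA]
      nlinarith [hCS]
    -- sum up
    calc (∫⁻ θ in Ioo (0:ℝ) Θ, ENNReal.ofReal ((dPiu (r, θ))^2))
        = ∫⁻ θ in Ioc (t 0) (t (N-1)), ENNReal.ofReal ((dPiu (r, θ))^2) := by
          rw [ht0, htN]; exact setLIntegral_congr Ioo_ae_eq_Ioc
      _ = ∑ j ∈ Finset.range (N-1), ∫⁻ θ in Ioc (t j) (t (j+1)),
            ENNReal.ofReal ((dPiu (r, θ))^2) :=
          (sum_Ioc_lintegral _ t (N-1) hstep').symm
      _ ≤ ∑ j ∈ Finset.range (N-1), ∫⁻ θ in Ioc (t j) (t (j+1)),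
            ENNReal.ofReal ((pd2 (pd1 u) (r, θ))^2) :=
          Finset.sum_le_sum (fun j hj => keyj j (by
            have := Finset.mem_range.mp hj; omega))
      _ = ∫⁻ θ in Ioc (t 0) (t (N-1)), ENNReal.ofReal ((pd2 (pd1 u) (r, θ))^2) :=
          sum_Ioc_lintegral _ t (N-1) hstep'
      _ = ∫⁻ θ in Ioo (0:ℝ) Θ, ENNReal.ofReal ((pd2 (pd1 u) (r, θ))^2) := by
          rw [ht0, htN]; exact (setLIntegral_congr Ioo_ae_eq_Ioc).symm
  -- outer integral
  rw [wL2r, wL2r]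
  refine setLIntegral_mono' measurableSet_Ioo (fun r hr => ?_)
  have h1 : ∀ v : ℝ × ℝ → ℝ, (∫⁻ θ in Ioo (0:ℝ) Θ, ENNReal.ofReal ((v (r, θ))^2 * r))
      = (∫⁻ θ in Ioo (0:ℝ) Θ, ENNReal.ofReal ((v (r, θ))^2)) * ENNReal.ofReal r := by
    intro v
    rw [← lintegral_mul_const' (ENNReal.ofReal r) _ ENNReal.ofReal_ne_top]
    exact setLIntegral_congr_fun measurableSet_Ioo
      (fun θ _ => by rw [ENNReal.ofReal_mul (sq_nonneg _)])
  rw [h1 dPiu, h1 (pd2 (pd1 u))]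
  exact mul_le_mul_left (key r hr) _
end

section
/- For every twice continuously differentiable function u on [0,1] × [0,Θ], the interpolation error ε = u − Πu satisfies ‖∂_θ ε‖²_{L²_{1/r}(Q)} ≤ h² ‖∂_{θθ} u‖²_{L²_{1/r}(Q)}, where ∂_θ ε is defined for θ outside the partition nodes and the inequality holds in [0,∞]. -/
open MeasureTheory Set Real
open scoped ENNReal Topology

/-- Cauchy–Schwarz for lintegrals: `(∫⁻ g)² ≤ μ(s) ∫⁻ g²`. -/
lemma cs_aux {s : Set ℝ} {g : ℝ → ℝ≥0∞}
    (hg : AEMeasurable g (volume.restrict s)) :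
    (∫⁻ x in s, g x) ^ 2 ≤ volume s * ∫⁻ x in s, (g x) ^ 2 := by
  have hpq : Real.HolderConjugate 2 2 := ⟨by norm_num, by norm_num, by norm_num⟩
  have h := ENNReal.lintegral_mul_le_Lp_mul_Lq (volume.restrict s) hpq
    (f := fun _ => (1 : ℝ≥0∞)) (g := g) aemeasurable_const hg
  simp only [Pi.mul_apply, one_mul, ENNReal.one_rpow, lintegral_one,
    Measure.restrict_apply, MeasurableSet.univ, univ_inter] at h
  have h2 := pow_le_pow_left' h 2
  have e1 : ((volume s ^ (1/2 : ℝ)) * (∫⁻ x in s, g x ^ (2:ℝ)) ^ (1/2 : ℝ)) ^ 2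
      = volume s * ∫⁻ x in s, g x ^ (2:ℝ) := by
    rw [mul_pow, ← ENNReal.rpow_natCast (volume s ^ (1/2:ℝ)) 2,
      ← ENNReal.rpow_natCast ((∫⁻ x in s, g x ^ (2:ℝ)) ^ (1/2:ℝ)) 2,
      ← ENNReal.rpow_mul, ← ENNReal.rpow_mul]
    norm_num
  have e2 : ∫⁻ x in s, g x ^ (2:ℝ) = ∫⁻ x in s, (g x) ^ 2 := by
    refine lintegral_congr fun x => ?_
    rw [← ENNReal.rpow_natCast (g x) 2]
    norm_num
  calc (∫⁻ x in s, g x) ^ 2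
      ≤ ((volume s ^ (1/2 : ℝ)) * (∫⁻ x in s, g x ^ (2:ℝ)) ^ (1/2 : ℝ)) ^ 2 := h2
    _ = volume s * ∫⁻ x in s, (g x) ^ 2 := by rw [e1, e2]

/-- Core 1D estimate: on an interval `(a,b)`, for `g` which is C² there and continuous
on `[a,b]`, `∫ (g' − slope)² ≤ (b−a)² ∫ g''²`. -/
lemma interval_est {a b : ℝ} (hab : a < b) {g : ℝ → ℝ}
    (hgc : ContinuousOn g (Icc a b))
    (hg : ∀ x ∈ Ioo a b, ContDiffAt ℝ 2 g x) :
    ∫⁻ θ in Ioo a b, ENNReal.ofReal ((deriv g θ - (g b - g a) / (b - a)) ^ 2)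
      ≤ ENNReal.ofReal ((b - a) ^ 2)
        * ∫⁻ θ in Ioo a b, ENNReal.ofReal (deriv (deriv g) θ ^ 2) := by
  set m := (g b - g a) / (b - a) with hm
  set B := ∫⁻ θ in Ioo a b, ENNReal.ofReal (deriv (deriv g) θ ^ 2) with hB
  have hgc2 : ContDiffOn ℝ 2 g (Ioo a b) := fun x hx => (hg x hx).contDiffWithinAt
  have hd1 : ContDiffOn ℝ 1 (deriv g) (Ioo a b) :=
    hgc2.deriv_of_isOpen isOpen_Ioo (by norm_num)
  have hg2cont : ContinuousOn (deriv (deriv g)) (Ioo a b) :=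
    hd1.continuousOn_deriv_of_isOpen isOpen_Ioo le_rfl
  have hder : ∀ x ∈ Ioo a b, HasDerivAt g (deriv g x) x := fun x hx =>
    ((hg x hx).differentiableAt (by norm_num)).hasDerivAt
  have hder2 : ∀ x ∈ Ioo a b, HasDerivAt (deriv g) (deriv (deriv g) x) x := fun x hx =>
    (((hd1.differentiableOn one_ne_zero).differentiableAt (isOpen_Ioo.mem_nhds hx)).hasDerivAt)
  obtain ⟨ξ, hξ, hξm⟩ := exists_hasDerivAt_eq_slope g (deriv g) hab hgc hder
  have key : ∀ θ ∈ Ioo a b,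
      ENNReal.ofReal ((deriv g θ - m) ^ 2) ≤ ENNReal.ofReal (b - a) * B := by
    intro θ hθ
    set c := min ξ θ with hc'
    set d := max ξ θ with hd'
    have hc : c ∈ Ioo a b := ⟨lt_min hξ.1 hθ.1, min_lt_of_left_lt hξ.2⟩
    have hd : d ∈ Ioo a b := ⟨lt_of_lt_of_le hξ.1 (le_max_left _ _), max_lt hξ.2 hθ.2⟩
    have hcd : c ≤ d := min_le_max
    have hsub : uIcc ξ θ ⊆ Ioo a b := by
      rw [uIcc]; exact Icc_subset_Ioo hc.1 hd.2
    have hIccsub : Icc c d ⊆ Ioo a b := Icc_subset_Ioo hc.1 hd.2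
    have hIocsub : Ioc c d ⊆ Ioo a b := fun x hx => ⟨hc.1.trans hx.1, lt_of_le_of_lt hx.2 hd.2⟩
    have hint : IntervalIntegrable (deriv (deriv g)) volume ξ θ :=
      (hg2cont.mono hsub).intervalIntegrable
    have hftc : ∫ s in ξ..θ, deriv (deriv g) s = deriv g θ - deriv g ξ :=
      intervalIntegral.integral_eq_sub_of_hasDerivAt (fun x hx => hder2 x (hsub hx)) hint
    have habs : |deriv g θ - m| ≤ ∫ s in c..d, |deriv (deriv g) s| := by
      rw [hm, ← hξm, ← hftc]
      rcases le_total ξ θ with hle | hle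
      · rw [hc', hd', min_eq_left hle, max_eq_right hle]
        exact intervalIntegral.abs_integral_le_integral_abs hle
      · rw [hc', hd', min_eq_right hle, max_eq_left hle,
          intervalIntegral.integral_symm, abs_neg]
        exact intervalIntegral.abs_integral_le_integral_abs hle
    have hintabs : IntegrableOn (fun s => |deriv (deriv g) s|) (Ioc c d) := by
      have : ContinuousOn (fun s => |deriv (deriv g) s|) (Icc c d) :=
        (hg2cont.mono hIccsub).abs
      exact (this.integrableOn_Icc).mono_set Ioc_subset_Icc_self
    have hnn : 0 ≤ ∫ s in c..d, |deriv (deriv g) s| :=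
      intervalIntegral.integral_nonneg hcd fun x _ => abs_nonneg _
    have heq : ENNReal.ofReal (∫ s in c..d, |deriv (deriv g) s|)
        = ∫⁻ s in Ioc c d, ENNReal.ofReal |deriv (deriv g) s| := by
      rw [intervalIntegral.integral_of_le hcd,
        MeasureTheory.ofReal_integral_eq_lintegral_ofReal hintabs
          (Filter.Eventually.of_forall fun x => abs_nonneg _)]
    have hmeas : AEMeasurable (fun s => ENNReal.ofReal |deriv (deriv g) s|)
        (volume.restrict (Ioc c d)) := by
      exact ENNReal.measurable_ofReal.comp_aemeasurable
        (((hg2cont.mono hIocsub).abs).aemeasurable measurableSet_Ioc)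
    calc ENNReal.ofReal ((deriv g θ - m) ^ 2)
        = ENNReal.ofReal (|deriv g θ - m| ^ 2) := by rw [sq_abs]
      _ ≤ ENNReal.ofReal ((∫ s in c..d, |deriv (deriv g) s|) ^ 2) :=
          ENNReal.ofReal_le_ofReal (pow_le_pow_left₀ (abs_nonneg _) habs 2)
      _ = (ENNReal.ofReal (∫ s in c..d, |deriv (deriv g) s|)) ^ 2 :=
          (ENNReal.ofReal_pow hnn 2)
      _ = (∫⁻ s in Ioc c d, ENNReal.ofReal |deriv (deriv g) s|) ^ 2 := by rw [heq]
      _ ≤ volume (Ioc c d) * ∫⁻ s in Ioc c d, (ENNReal.ofReal |deriv (deriv g) s|) ^ 2 :=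
          cs_aux hmeas
      _ = ENNReal.ofReal (d - c) * ∫⁻ s in Ioc c d, ENNReal.ofReal (deriv (deriv g) s ^ 2) := by
          rw [Real.volume_Ioc]
          congr 1
          refine lintegral_congr fun x => ?_
          rw [← ENNReal.ofReal_pow (abs_nonneg _), sq_abs]
      _ ≤ ENNReal.ofReal (b - a) * B := by
          refine mul_le_mul' (ENNReal.ofReal_le_ofReal ?_) (lintegral_mono_set hIocsub)
          have := hc.1; have := hd.2; linarith
  calc ∫⁻ θ in Ioo a b, ENNReal.ofReal ((deriv g θ - m) ^ 2)
      ≤ ∫⁻ _ in Ioo a b, ENNReal.ofReal (b - a) * B := by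
        refine lintegral_mono_ae ?_
        filter_upwards [ae_restrict_mem measurableSet_Ioo] with θ hθ using key θ hθ
    _ = ENNReal.ofReal (b - a) * B * volume (Ioo a b) := setLIntegral_const _ _
    _ = ENNReal.ofReal ((b - a) ^ 2) * B := by
        rw [Real.volume_Ioo, mul_right_comm, ← ENNReal.ofReal_mul (by linarith), ← sq]

/-- Angular error estimate for the interpolant: for `u` twice
continuously differentiable on `[0,1] × [0,Θ]` and `ε = u − Πu`,
`‖∂_θ ε‖²_{L²_{1/r}(Q)} ≤ h² ‖∂_{θθ} u‖²_{L²_{1/r}(Q)}` in `[0,∞]`,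
where `h = max_j (θ_{j+1} − θ_j)` and `∂_θ ε (r,θ) = ∂_θ u(r,θ) − Σ_i u(r,θ_i) e_i′(θ)`
is defined for `θ` outside the partition nodes. -/
theorem stmt8 (Θ : ℝ) (hΘ₀ : 0 < Θ) (hΘ₂ : Θ < 2 * π)
    (N : ℕ) (hN : 2 ≤ N) (t : ℕ → ℝ) (e : ℕ → ℝ → ℝ)
    (ht0 : t 0 = 0) (htN : t (N - 1) = Θ)
    (htmono : ∀ j, j + 1 < N → t j < t (j + 1))
    (hnode : ∀ i < N, ∀ j < N, e i (t j) = if i = j then 1 else 0)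
    (hlin : ∀ i < N, ∀ j, j + 1 < N → ∀ x ∈ Icc (t j) (t (j + 1)),
      e i x = e i (t j) + (e i (t (j + 1)) - e i (t j)) * (x - t j) / (t (j + 1) - t j))
    (h : ℝ) (hmax : IsGreatest ((fun j => t (j + 1) - t j) '' {j : ℕ | j + 1 < N}) h)
    (u : ℝ × ℝ → ℝ) (hu : ContDiffOn ℝ 2 u (Icc (0:ℝ) 1 ×ˢ Icc (0:ℝ) Θ))
    (dε : ℝ × ℝ → ℝ)
    (hdε : ∀ p, dε p = pd2 u p - ∑ i ∈ Finset.range N, u (p.1, t i) * deriv (e i) p.2) :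
    wL2invr Θ dε ≤ ENNReal.ofReal (h ^ 2) * wL2invr Θ (pd2 (pd2 u)) := by
  classical
  -- monotonicity of the partition
  have tmono : ∀ i j, i ≤ j → j < N → t i ≤ t j := by
    intro i j hij hjN
    induction j with
    | zero => rw [Nat.le_zero.mp hij]
    | succ k ih =>
      rcases Nat.lt_or_ge i (k + 1) with hik | hik
      · exact (ih (by omega) (by omega)).trans (htmono k hjN).le
      · have : i = k + 1 := by omega
        rw [this]
  have ht0' : ∀ j < N, 0 ≤ t j := by
    intro j hj
    have := tmono 0 j (Nat.zero_le _) hj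
    rwa [ht0] at this
  have htΘ : ∀ j < N, t j ≤ Θ := by
    intro j hj
    have := tmono j (N - 1) (by omega) (by omega)
    rwa [htN] at this
  -- core per-r estimate
  have core : ∀ r ∈ Ioo (0:ℝ) 1,
      (∫⁻ θ in Ioo (0:ℝ) Θ, ENNReal.ofReal (dε (r, θ) ^ 2))
        ≤ ENNReal.ofReal (h ^ 2)
          * ∫⁻ θ in Ioo (0:ℝ) Θ, ENNReal.ofReal (pd2 (pd2 u) (r, θ) ^ 2) := by
    intro r hr
    set g : ℝ → ℝ := fun θ => u (r, θ) with hgdef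
    have hpd2 : ∀ θ : ℝ, pd2 (pd2 u) (r, θ) = deriv (deriv g) θ := fun θ => rfl
    have hgAt : ∀ θ ∈ Ioo (0:ℝ) Θ, ContDiffAt ℝ 2 g θ := by
      intro θ hθ
      have hmem : (Ioo (0:ℝ) 1 ×ˢ Ioo (0:ℝ) Θ) ∈ 𝓝 (r, θ) :=
        (isOpen_Ioo.prod isOpen_Ioo).mem_nhds ⟨hr, hθ⟩
      have huAt : ContDiffAt ℝ 2 u (r, θ) :=
        hu.contDiffAt (Filter.mem_of_superset hmem
          (prod_mono Ioo_subset_Icc_self Ioo_subset_Icc_self))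
      exact huAt.comp θ ((contDiffAt_const (c := r)).prodMk contDiffAt_id)
    have hgc : ContinuousOn g (Icc 0 Θ) := by
      refine hu.continuousOn.comp (Continuous.continuousOn (by fun_prop)) ?_
      exact fun θ hθ => ⟨⟨hr.1.le, hr.2.le⟩, hθ⟩
    set S : ℕ → Set ℝ := fun j => if j + 1 < N then Ioo (t j) (t (j + 1)) else ∅ with hS
    have hSmeas : ∀ j, MeasurableSet (S j) := by
      intro j
      rw [hS]
      dsimp only
      split
      · exact measurableSet_Ioo
      · exact MeasurableSet.empty
    have hSsub : ∀ j, S j ⊆ Ioo 0 Θ := by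
      intro j
      rw [hS]
      dsimp only
      split
      · rename_i hj
        intro x hx
        exact ⟨lt_of_le_of_lt (ht0' j (by omega)) hx.1,
          lt_of_lt_of_le hx.2 (htΘ (j + 1) hj)⟩
      · exact empty_subset _
    have hdisj2 : ∀ i j, i < j → Disjoint (S i) (S j) := by
      intro i j hlt
      rw [hS]
      dsimp only
      split
      · split
        · rename_i hi hj
          refine Set.disjoint_left.mpr fun x hxi hxj => ?_
          have h1 : t (i + 1) ≤ t j := tmono (i + 1) j (by omega) (by omega)
          exact absurd (hxi.2.trans_le (h1.trans hxj.1.le)) (lt_irrefl x)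
        · exact disjoint_empty _
      · exact empty_disjoint _
    have hdisj : Pairwise (Function.onFun Disjoint S) := by
      intro i j hij
      rcases lt_or_gt_of_ne hij with hlt | hlt
      · exact hdisj2 i j hlt
      · exact (hdisj2 j i hlt).symm
    have per : ∀ j, (∫⁻ θ in S j, ENNReal.ofReal (dε (r, θ) ^ 2))
        ≤ ENNReal.ofReal (h ^ 2)
          * ∫⁻ θ in S j, ENNReal.ofReal (deriv (deriv g) θ ^ 2) := by
      intro j
      rw [hS]
      dsimp only
      split
      case isFalse => simp
      case isTrue hj =>
        have hab : t j < t (j + 1) := htmono j hj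
        have hjN : j < N := by omega
        have hdeq : ∀ θ ∈ Ioo (t j) (t (j + 1)),
            dε (r, θ) = deriv g θ - (g (t (j + 1)) - g (t j)) / (t (j + 1) - t j) := by
          intro θ hθ
          rw [hdε]
          have hde : ∀ i < N, deriv (e i) θ
              = ((if i = j + 1 then (1:ℝ) else 0) - if i = j then 1 else 0)
                / (t (j + 1) - t j) := by
            intro i hi
            have hev : e i =ᶠ[𝓝 θ] fun x =>
                e i (t j) + (e i (t (j + 1)) - e i (t j)) * (x - t j) / (t (j + 1) - t j) := by
              filter_upwards [isOpen_Ioo.mem_nhds hθ] with x hx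
              exact hlin i hi j hj x (Ioo_subset_Icc_self hx)
            have H : HasDerivAt (fun x =>
                e i (t j) + (e i (t (j + 1)) - e i (t j)) * (x - t j) / (t (j + 1) - t j))
                ((e i (t (j + 1)) - e i (t j)) * 1 / (t (j + 1) - t j)) θ :=
              ((((hasDerivAt_id θ).sub_const (t j)).const_mul _).div_const _).const_add _
            rw [hev.deriv_eq, H.deriv, mul_one, hnode i hi (j + 1) hj, hnode i hi j hjN]
          have hsum : ∑ i ∈ Finset.range N, u (r, t i) * deriv (e i) θ
              = (g (t (j + 1)) - g (t j)) / (t (j + 1) - t j) := by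
            rw [Finset.sum_congr rfl fun i hi => by
              rw [hde i (Finset.mem_range.mp hi)]]
            simp only [← mul_div_assoc]
            rw [← Finset.sum_div]
            congr 1
            simp only [mul_sub, Finset.sum_sub_distrib, mul_ite, mul_one, mul_zero]
            rw [Finset.sum_ite_eq' (Finset.range N) (j + 1) fun i => u (r, t i),
              Finset.sum_ite_eq' (Finset.range N) j fun i => u (r, t i),
              if_pos (Finset.mem_range.mpr hj), if_pos (Finset.mem_range.mpr hjN)]
          rw [hsum]
          rfl
        calc ∫⁻ θ in Ioo (t j) (t (j + 1)), ENNReal.ofReal (dε (r, θ) ^ 2)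
            = ∫⁻ θ in Ioo (t j) (t (j + 1)), ENNReal.ofReal
                ((deriv g θ - (g (t (j + 1)) - g (t j)) / (t (j + 1) - t j)) ^ 2) := by
              refine setLIntegral_congr_fun measurableSet_Ioo
                (fun θ hθ => ?_)
              rw [hdeq θ hθ]
          _ ≤ ENNReal.ofReal ((t (j + 1) - t j) ^ 2)
              * ∫⁻ θ in Ioo (t j) (t (j + 1)), ENNReal.ofReal (deriv (deriv g) θ ^ 2) := by
              refine interval_est hab (hgc.mono ?_) (fun x hx => hgAt x ?_)
              · exact Icc_subset_Icc (ht0' j hjN) (htΘ (j + 1) hj)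
              · exact ⟨lt_of_le_of_lt (ht0' j hjN) hx.1,
                  lt_of_lt_of_le hx.2 (htΘ (j + 1) hj)⟩
          _ ≤ ENNReal.ofReal (h ^ 2)
              * ∫⁻ θ in Ioo (t j) (t (j + 1)), ENNReal.ofReal (deriv (deriv g) θ ^ 2) := by
              refine mul_le_mul_left (ENNReal.ofReal_le_ofReal ?_) _
              have hle : t (j + 1) - t j ≤ h := hmax.2 ⟨j, hj, rfl⟩
              exact pow_le_pow_left₀ (by linarith) hle 2
    have hcover : Ioo (0:ℝ) Θ ⊆ (⋃ j, S j) ∪ (t '' {i | i < N}) := by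
      intro θ hθ
      by_cases hnd : ∃ i, i < N ∧ t i = θ
      · right
        obtain ⟨i, hi, hti⟩ := hnd
        exact ⟨i, hi, hti⟩
      · left
        have hPN : ¬ t (N - 1) < θ := by
          rw [htN]
          exact not_lt.mpr hθ.2.le
        have hex : ∃ k, ¬ t k < θ := ⟨N - 1, hPN⟩
        set k := Nat.find hex with hk'
        have hk : ¬ t k < θ := Nat.find_spec hex
        have hkN : k ≤ N - 1 := Nat.find_min' hex hPN
        have hk0 : k ≠ 0 := by
          intro h0
          rw [h0, ht0] at hk
          exact hk hθ.1
        have hk1 : t (k - 1) < θ :=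
          not_not.mp (Nat.find_min hex (show k - 1 < k by omega))
        have hθk : θ < t k :=
          (not_lt.mp hk).lt_of_ne fun heq => hnd ⟨k, by omega, heq.symm⟩
        refine mem_iUnion.mpr ⟨k - 1, ?_⟩
        rw [hS]
        dsimp only
        rw [if_pos (show k - 1 + 1 < N by omega)]
        refine ⟨hk1, ?_⟩
        rw [show k - 1 + 1 = k by omega]
        exact hθk
    have hnull : volume (t '' {i | i < N}) = 0 :=
      (Set.Countable.image (Set.to_countable _) t).measure_zero _
    calc ∫⁻ θ in Ioo (0:ℝ) Θ, ENNReal.ofReal (dε (r, θ) ^ 2)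
        ≤ ∫⁻ θ in (⋃ j, S j) ∪ (t '' {i | i < N}), ENNReal.ofReal (dε (r, θ) ^ 2) :=
          lintegral_mono_set hcover
      _ ≤ (∫⁻ θ in ⋃ j, S j, ENNReal.ofReal (dε (r, θ) ^ 2))
            + ∫⁻ θ in t '' {i | i < N}, ENNReal.ofReal (dε (r, θ) ^ 2) :=
          lintegral_union_le _ _ _
      _ = ∫⁻ θ in ⋃ j, S j, ENNReal.ofReal (dε (r, θ) ^ 2) := by
          rw [setLIntegral_measure_zero _ _ hnull, add_zero]
      _ ≤ ∑' j, ∫⁻ θ in S j, ENNReal.ofReal (dε (r, θ) ^ 2) := lintegral_iUnion_le _ _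
      _ ≤ ∑' j, ENNReal.ofReal (h ^ 2)
            * ∫⁻ θ in S j, ENNReal.ofReal (deriv (deriv g) θ ^ 2) :=
          ENNReal.tsum_le_tsum per
      _ = ENNReal.ofReal (h ^ 2)
            * ∑' j, ∫⁻ θ in S j, ENNReal.ofReal (deriv (deriv g) θ ^ 2) :=
          ENNReal.tsum_mul_left
      _ = ENNReal.ofReal (h ^ 2)
            * ∫⁻ θ in ⋃ j, S j, ENNReal.ofReal (deriv (deriv g) θ ^ 2) := by
          rw [lintegral_iUnion hSmeas hdisj]
      _ ≤ ENNReal.ofReal (h ^ 2)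
            * ∫⁻ θ in Ioo (0:ℝ) Θ, ENNReal.ofReal (deriv (deriv g) θ ^ 2) :=
          mul_le_mul_right (lintegral_mono_set (iUnion_subset hSsub)) _
      _ = ENNReal.ofReal (h ^ 2)
            * ∫⁻ θ in Ioo (0:ℝ) Θ, ENNReal.ofReal (pd2 (pd2 u) (r, θ) ^ 2) := rfl
  -- conclude
  rw [wL2invr, wL2invr, ← lintegral_const_mul' _ _ ENNReal.ofReal_ne_top]
  refine lintegral_mono_ae ?_
  filter_upwards [ae_restrict_mem measurableSet_Ioo] with r hr
  have hinv : (ENNReal.ofReal r⁻¹) ≠ ⊤ := ENNReal.ofReal_ne_top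
  calc ∫⁻ θ in Ioo (0:ℝ) Θ, ENNReal.ofReal (dε (r, θ) ^ 2 / r)
      = (∫⁻ θ in Ioo (0:ℝ) Θ, ENNReal.ofReal (dε (r, θ) ^ 2)) * ENNReal.ofReal r⁻¹ := by
        rw [← lintegral_mul_const' _ _ hinv]
        exact lintegral_congr fun θ => by
          rw [div_eq_mul_inv, ENNReal.ofReal_mul (sq_nonneg _)]
    _ ≤ (ENNReal.ofReal (h ^ 2)
          * ∫⁻ θ in Ioo (0:ℝ) Θ, ENNReal.ofReal (pd2 (pd2 u) (r, θ) ^ 2))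
          * ENNReal.ofReal r⁻¹ :=
        mul_le_mul_left (core r hr) _
    _ = ENNReal.ofReal (h ^ 2)
          * ∫⁻ θ in Ioo (0:ℝ) Θ, ENNReal.ofReal (pd2 (pd2 u) (r, θ) ^ 2 / r) := by
        rw [mul_assoc, ← lintegral_mul_const' _ _ hinv]
        congr 1
        exact lintegral_congr fun θ => by
          rw [div_eq_mul_inv, ENNReal.ofReal_mul (sq_nonneg _)]
end

section
/- For every twice continuously differentiable function u on [0,1] × [0,Θ], the interpolation error satisfies ‖u − Πu‖²_{L²_r(Q)} ≤ h⁴ ‖∂_{θθ} u‖²_{L²_{1/r}(Q)}, where the inequality holds in [0,∞]. -/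
open MeasureTheory Set Real

/-- The interpolant `(Πu)(r,θ) = Σ_i u(r, θ_i) e_i(θ)`. -/
noncomputable def interp (N : ℕ) (t : ℕ → ℝ) (e : ℕ → ℝ → ℝ) (u : ℝ × ℝ → ℝ) :
    ℝ × ℝ → ℝ :=
  fun p => ∑ i ∈ Finset.range N, u (p.1, t i) * e i p.2


section AuxStmt9
open intervalIntegral

/-- Cauchy–Schwarz: `(∫ |q|)² ≤ (b-a) ∫ q²` for continuous `q`. -/
lemma csq {a b : ℝ} (hab : a ≤ b) {q : ℝ → ℝ} (hq : ContinuousOn q (Icc a b)) :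
    (∫ x in a..b, |q x|) ^ 2 ≤ (b - a) * ∫ x in a..b, q x ^ 2 := by
  rcases eq_or_lt_of_le hab with rfl | hab'
  · simp
  have huIcc : uIcc a b = Icc a b := uIcc_of_le hab
  have hqi : IntervalIntegrable q volume a b := (huIcc ▸ hq).intervalIntegrable
  have habsi : IntervalIntegrable (fun x => |q x|) volume a b :=
    (huIcc ▸ hq.abs).intervalIntegrable
  have hsqi : IntervalIntegrable (fun x => q x ^ 2) volume a b :=
    (huIcc ▸ hq.pow 2).intervalIntegrable
  set L := b - a with hL
  have hL0 : 0 < L := by simp [hL]; linarith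
  set S := ∫ x in a..b, |q x| with hS
  set T := ∫ x in a..b, q x ^ 2 with hT
  set c := S / L with hc
  have key : (0:ℝ) ≤ ∫ x in a..b, (|q x| - c) ^ 2 :=
    integral_nonneg hab (fun x _ => sq_nonneg _)
  have expand : ∫ x in a..b, (|q x| - c) ^ 2 = T - 2 * c * S + c ^ 2 * L := by
    have : ∀ x, (|q x| - c) ^ 2 = q x ^ 2 - 2 * c * |q x| + c ^ 2 := by
      intro x; rw [sub_sq, sq_abs]; ring
    simp_rw [this]
    rw [integral_add (hsqi.sub (habsi.const_mul (2*c)) |>.congr ?_) (intervalIntegrable_const),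
        integral_sub hsqi (habsi.const_mul (2*c))]
    · simp [hT, hS, intervalIntegral.integral_const_mul, hL]
      ring
    · exact fun _ _ => rfl
  have h2 : 0 ≤ T - 2 * c * S + c ^ 2 * L := expand ▸ key
  have : c ^ 2 * L = S ^ 2 / L := by rw [hc]; field_simp
  rw [this, hc] at h2
  have e1 : 2 * (S / L) * S = 2 * (S ^ 2 / L) := by field_simp
  rw [e1] at h2
  have : S ^ 2 / L ≤ T := by linarith
  calc S ^ 2 = (S ^ 2 / L) * L := by field_simp
  _ ≤ T * L := by nlinarith
  _ = L * T := by ring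

/-- 1D estimate: if `f` vanishes at both endpoints and has two derivatives `g`, `g2`
within `[a,b]`, then `∫ f² ≤ (b-a)⁴ ∫ g2²`. -/
lemma oneD_s9 {a b : ℝ} (hab : a < b) {f g g2 : ℝ → ℝ}
    (hf : ∀ x ∈ Icc a b, HasDerivWithinAt f (g x) (Icc a b) x)
    (hg : ∀ x ∈ Icc a b, HasDerivWithinAt g (g2 x) (Icc a b) x)
    (hgc : ContinuousOn g (Icc a b)) (hg2c : ContinuousOn g2 (Icc a b))
    (hfa : f a = 0) (hfb : f b = 0) :
    ∫ x in a..b, f x ^ 2 ≤ (b - a) ^ 4 * ∫ x in a..b, g2 x ^ 2 := by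
  have hab' : a ≤ b := hab.le
  have huIcc : uIcc a b = Icc a b := uIcc_of_le hab'
  have hfc : ContinuousOn f (Icc a b) := fun x hx => (hf x hx).continuousWithinAt
  -- derivatives at interior points are full derivatives
  have hfd : ∀ x ∈ Ioo a b, HasDerivAt f (g x) x := fun x hx =>
    (hf x (Ioo_subset_Icc_self hx)).hasDerivAt (Icc_mem_nhds hx.1 hx.2)
  have hgd : ∀ x ∈ Ioo a b, HasDerivAt g (g2 x) x := fun x hx =>
    (hg x (Ioo_subset_Icc_self hx)).hasDerivAt (Icc_mem_nhds hx.1 hx.2)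
  -- Rolle
  obtain ⟨ξ, hξ, hgξ⟩ := exists_hasDerivAt_eq_zero hab hfc (hfa.trans hfb.symm) hfd
  set B2 := ∫ x in a..b, |g2 x| with hB2def
  have hg2i : IntervalIntegrable g2 volume a b := (huIcc ▸ hg2c).intervalIntegrable
  have hg2ai : IntervalIntegrable (fun x => |g2 x|) volume a b :=
    (huIcc ▸ hg2c.abs).intervalIntegrable
  have hB2nn : 0 ≤ B2 := integral_nonneg hab' (fun x _ => abs_nonneg _)
  -- bound |g x| ≤ B2 on [a,b]
  have hgbd : ∀ x ∈ Icc a b, |g x| ≤ B2 := by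
    intro x hx
    rcases le_or_gt ξ x with hle | hlt
    · have ftc : ∫ y in ξ..x, g2 y = g x - g ξ := by
        apply integral_eq_sub_of_hasDeriv_right_of_le hle
          (hgc.mono (Icc_subset_Icc hξ.1.le hx.2))
          (fun y hy => ((hgd y ⟨hξ.1.trans hy.1, hy.2.trans_le hx.2⟩).hasDerivWithinAt))
          (hg2i.mono_set (by rw [huIcc, uIcc_of_le hle]; exact Icc_subset_Icc hξ.1.le hx.2))
      have : g x = ∫ y in ξ..x, g2 y := by rw [ftc, hgξ, sub_zero]
      rw [this]
      calc |∫ y in ξ..x, g2 y| ≤ ∫ y in ξ..x, |g2 y| :=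
            intervalIntegral.abs_integral_le_integral_abs hle
        _ ≤ B2 := by
            apply intervalIntegral.integral_mono_interval hξ.1.le hle hx.2 _ hg2ai
            filter_upwards with y using abs_nonneg _
    · have ftc : ∫ y in x..ξ, g2 y = g ξ - g x := by
        apply integral_eq_sub_of_hasDeriv_right_of_le hlt.le
          (hgc.mono (Icc_subset_Icc hx.1 hξ.2.le))
          (fun y hy => ((hgd y ⟨hx.1.trans_lt hy.1, hy.2.trans hξ.2⟩).hasDerivWithinAt))
          (hg2i.mono_set (by rw [huIcc, uIcc_of_le hlt.le]; exact Icc_subset_Icc hx.1 hξ.2.le))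
      have : g x = -∫ y in x..ξ, g2 y := by rw [ftc, hgξ]; ring
      rw [this, abs_neg]
      calc |∫ y in x..ξ, g2 y| ≤ ∫ y in x..ξ, |g2 y| :=
            intervalIntegral.abs_integral_le_integral_abs hlt.le
        _ ≤ B2 := by
            apply intervalIntegral.integral_mono_interval hx.1 hlt.le hξ.2.le _ hg2ai
            filter_upwards with y using abs_nonneg _
  -- bound |f x| ≤ (b-a) * B2
  have hgi : IntervalIntegrable g volume a b := (huIcc ▸ hgc).intervalIntegrable
  have hfbd : ∀ x ∈ Icc a b, |f x| ≤ (b - a) * B2 := by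
    intro x hx
    have ftc : ∫ y in a..x, g y = f x - f a := by
      apply integral_eq_sub_of_hasDeriv_right_of_le hx.1
        (hfc.mono (Icc_subset_Icc le_rfl hx.2))
        (fun y hy => ((hfd y ⟨hy.1, hy.2.trans_le hx.2⟩).hasDerivWithinAt))
        (hgi.mono_set (by rw [huIcc, uIcc_of_le hx.1]; exact Icc_subset_Icc le_rfl hx.2))
    have hfx : f x = ∫ y in a..x, g y := by rw [ftc, hfa, sub_zero]
    rw [hfx]
    calc |∫ y in a..x, g y| ≤ ∫ y in a..x, |g y| :=
          intervalIntegral.abs_integral_le_integral_abs hx.1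
      _ ≤ ∫ _ in a..x, B2 := by
          apply intervalIntegral.integral_mono_on hx.1
            ((huIcc ▸ hgc.abs).intervalIntegrable.mono_set
              (by rw [huIcc, uIcc_of_le hx.1]; exact Icc_subset_Icc le_rfl hx.2))
            intervalIntegrable_const
          exact fun y hy => hgbd y ⟨hy.1, hy.2.trans hx.2⟩
      _ = (x - a) * B2 := by simp
      _ ≤ (b - a) * B2 := by nlinarith [hx.2]
  -- conclude
  have hfsqi : IntervalIntegrable (fun x => f x ^ 2) volume a b :=
    (huIcc ▸ hfc.pow 2).intervalIntegrable
  have step1 : ∫ x in a..b, f x ^ 2 ≤ (b - a) * ((b - a) * B2) ^ 2 := by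
    calc ∫ x in a..b, f x ^ 2 ≤ ∫ _ in a..b, ((b - a) * B2) ^ 2 := by
          apply intervalIntegral.integral_mono_on hab' hfsqi intervalIntegrable_const
          intro y hy
          calc f y ^ 2 = |f y| ^ 2 := (sq_abs _).symm
            _ ≤ ((b - a) * B2) ^ 2 := by
                apply pow_le_pow_left₀ (abs_nonneg _) (hfbd y hy)
      _ = (b - a) * ((b - a) * B2) ^ 2 := by simp [mul_comm]
  have step2 : B2 ^ 2 ≤ (b - a) * ∫ x in a..b, g2 x ^ 2 := csq hab' hg2c
  have hT : 0 ≤ ∫ x in a..b, g2 x ^ 2 := integral_nonneg hab' (fun x _ => sq_nonneg _)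
  have hL : (0:ℝ) < b - a := by linarith
  calc ∫ x in a..b, f x ^ 2 ≤ (b - a) * ((b - a) * B2) ^ 2 := step1
    _ = (b - a) ^ 3 * B2 ^ 2 := by ring
    _ ≤ (b - a) ^ 3 * ((b - a) * ∫ x in a..b, g2 x ^ 2) := by
        apply mul_le_mul_of_nonneg_left step2 (by positivity)
    _ = (b - a) ^ 4 * ∫ x in a..b, g2 x ^ 2 := by ring

end AuxStmt9

/-- `L²_r` error estimate for the interpolant: for `u` twice
continuously differentiable on `[0,1] × [0,Θ]`,
`‖u − Πu‖²_{L²_r(Q)} ≤ h⁴ ‖∂_{θθ} u‖²_{L²_{1/r}(Q)}` in `[0,∞]`,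
where `h = max_j (θ_{j+1} − θ_j)`. -/
theorem stmt9 (Θ : ℝ) (hΘ₀ : 0 < Θ) (hΘ₂ : Θ < 2 * π)
    (N : ℕ) (hN : 2 ≤ N) (t : ℕ → ℝ) (e : ℕ → ℝ → ℝ)
    (ht0 : t 0 = 0) (htN : t (N - 1) = Θ)
    (htmono : ∀ j, j + 1 < N → t j < t (j + 1))
    (hnode : ∀ i < N, ∀ j < N, e i (t j) = if i = j then 1 else 0)
    (hlin : ∀ i < N, ∀ j, j + 1 < N → ∀ x ∈ Icc (t j) (t (j + 1)),
      e i x = e i (t j) + (e i (t (j + 1)) - e i (t j)) * (x - t j) / (t (j + 1) - t j))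
    (h : ℝ) (hmax : IsGreatest ((fun j => t (j + 1) - t j) '' {j : ℕ | j + 1 < N}) h)
    (u : ℝ × ℝ → ℝ) (hu : ContDiffOn ℝ 2 u (Icc (0:ℝ) 1 ×ˢ Icc (0:ℝ) Θ)) :
    wL2r Θ (fun p => u p - interp N t e u p)
      ≤ ENNReal.ofReal (h ^ 4) * wL2invr Θ (pd2 (pd2 u)) := by
  -- monotonicity of nodes
  have hmono : ∀ k, k < N → ∀ i, i ≤ k → t i ≤ t k := by
    intro k
    induction k with
    | zero =>
      intro _ i hi
      have : i = 0 := by omega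
      subst this; exact le_rfl
    | succ k ih =>
      intro hk i hi
      rcases Nat.eq_or_lt_of_le hi with rfl | hi'
      · exact le_rfl
      · exact le_trans (ih (by omega) i (by omega)) (htmono k hk).le
  have hh : ∀ j, j + 1 < N → t (j + 1) - t j ≤ h := fun j hj => hmax.2 ⟨j, hj, rfl⟩
  have hhpos : 0 < h :=
    lt_of_lt_of_le (sub_pos.2 (htmono 0 (by omega))) (hh 0 (by omega))
  have hUD : UniqueDiffOn ℝ (Icc (0:ℝ) Θ) := uniqueDiffOn_Icc hΘ₀
  -- covering of (0,Θ) by the Ioc pieces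
  have hcover : Ioo (0:ℝ) Θ ⊆ ⋃ j ∈ Finset.range (N - 1), Ioc (t j) (t (j + 1)) := by
    have key : ∀ k, k < N → Ioc (t 0) (t k) ⊆ ⋃ j ∈ Finset.range (N - 1), Ioc (t j) (t (j + 1)) := by
      intro k
      induction k with
      | zero => intro _; simp
      | succ k ih =>
        intro hk
        have hsplit : Ioc (t 0) (t (k + 1)) ⊆ Ioc (t 0) (t k) ∪ Ioc (t k) (t (k + 1)) := by
          rw [Set.Ioc_union_Ioc_eq_Ioc (hmono k (by omega) 0 (by omega)) (htmono k hk).le]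
        intro x hx
        rcases hsplit hx with h1 | h1
        · exact ih (by omega) h1
        · exact Set.mem_biUnion (Finset.mem_range.2 (by omega)) h1
    intro x hx
    refine key (N - 1) (by omega) ?_
    rw [ht0, htN]
    exact ⟨hx.1, hx.2.le⟩
  -- disjointness of the pieces
  have hdisj : Set.PairwiseDisjoint (↑(Finset.range (N - 1)))
      (fun j => Ioc (t j) (t (j + 1))) := by
    have key : ∀ i j : ℕ, i < j → j < N - 1 →
        Disjoint (Ioc (t i) (t (i + 1))) (Ioc (t j) (t (j + 1))) := by
      intro i j hij hj
      rw [Set.Ioc_disjoint_Ioc]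
      calc min (t (i + 1)) (t (j + 1)) ≤ t (i + 1) := min_le_left _ _
        _ ≤ t j := hmono j (by omega) (i + 1) (by omega)
        _ ≤ max (t i) (t j) := le_max_right _ _
    intro i hi j hj hij
    simp only [Finset.coe_range, Set.mem_Iio] at hi hj
    rcases lt_or_gt_of_ne hij with h' | h'
    · exact key i j h' hj
    · exact (key j i h' hi).symm
  have hdisj' : Set.PairwiseDisjoint (↑(Finset.range (N - 1)))
      (fun j => Ioo (t j) (t (j + 1))) := fun i hi j hj hij =>
    ((hdisj hi hj hij).mono Ioo_subset_Ioc_self Ioo_subset_Ioc_self)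
  have hIoosub : ∀ j, j + 1 < N → Ioo (t j) (t (j + 1)) ⊆ Ioo (0:ℝ) Θ := by
    intro j hj x hx
    constructor
    · calc (0:ℝ) = t 0 := ht0.symm
        _ ≤ t j := hmono j (by omega) 0 (by omega)
        _ < x := hx.1
    · calc x < t (j + 1) := hx.2
        _ ≤ t (N - 1) := hmono (N - 1) (by omega) (j + 1) (by omega)
        _ = Θ := htN
  -- main per-radius estimate
  have main : ∀ r ∈ Ioo (0:ℝ) 1,
      (∫⁻ θ in Ioo (0:ℝ) Θ, ENNReal.ofReal
        (((fun p => u p - interp N t e u p) (r, θ)) ^ 2 * r))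
      ≤ ENNReal.ofReal (h ^ 4) *
        ∫⁻ θ in Ioo (0:ℝ) Θ, ENNReal.ofReal ((pd2 (pd2 u) (r, θ)) ^ 2 / r) := by
    intro r hr
    have hr0 : 0 < r := hr.1
    have hr1 : r < 1 := hr.2
    -- the radial slice
    have hgr : ContDiffOn ℝ 2 (fun θ : ℝ => u (r, θ)) (Icc 0 Θ) := by
      have hmt : MapsTo (fun θ : ℝ => (r, θ)) (Icc 0 Θ) (Icc (0:ℝ) 1 ×ˢ Icc (0:ℝ) Θ) :=
        fun θ hθ => ⟨⟨hr0.le, hr1.le⟩, hθ⟩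
      exact hu.comp ((contDiff_const.prodMk contDiff_id).contDiffOn) hmt
    set g : ℝ → ℝ := derivWithin (fun θ : ℝ => u (r, θ)) (Icc 0 Θ) with hgdef
    set g2 : ℝ → ℝ := derivWithin g (Icc 0 Θ) with hg2def
    have hgC1 : ContDiffOn ℝ 1 g (Icc 0 Θ) := hgr.derivWithin hUD (by norm_num)
    have hgd : ∀ x ∈ Icc (0:ℝ) Θ, HasDerivWithinAt (fun θ : ℝ => u (r, θ)) (g x) (Icc 0 Θ) x :=
      fun x hx => ((hgr.differentiableOn (by norm_num)) x hx).hasDerivWithinAt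
    have hg2d : ∀ x ∈ Icc (0:ℝ) Θ, HasDerivWithinAt g (g2 x) (Icc 0 Θ) x :=
      fun x hx => ((hgC1.differentiableOn (by norm_num)) x hx).hasDerivWithinAt
    have hgc : ContinuousOn g (Icc 0 Θ) := hgC1.continuousOn
    have hg2c : ContinuousOn g2 (Icc 0 Θ) := by
      have : ContDiffOn ℝ 0 g2 (Icc 0 Θ) := hgC1.derivWithin hUD (by norm_num)
      exact this.continuousOn
    -- identification of the second partial derivative
    have hpd : ∀ θ ∈ Ioo (0:ℝ) Θ, pd2 (pd2 u) (r, θ) = g2 θ := by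
      intro θ hθ
      have hnb : Icc (0:ℝ) Θ ∈ nhds θ := Icc_mem_nhds hθ.1 hθ.2
      have hev : (fun s => pd2 u (r, s)) =ᶠ[nhds θ] g := by
        filter_upwards [isOpen_Ioo.mem_nhds hθ] with s hs
        show deriv (fun t => u (r, t)) s = g s
        exact (derivWithin_of_mem_nhds (Icc_mem_nhds hs.1 hs.2)).symm
      calc pd2 (pd2 u) (r, θ) = deriv (fun s => pd2 u (r, s)) θ := rfl
        _ = deriv g θ := hev.deriv_eq
        _ = derivWithin g (Icc 0 Θ) θ := (derivWithin_of_mem_nhds hnb).symm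
        _ = g2 θ := rfl
    -- per-piece estimate
    have piece : ∀ j ∈ Finset.range (N - 1),
        (∫⁻ θ in Ioc (t j) (t (j + 1)), ENNReal.ofReal
          (((fun p => u p - interp N t e u p) (r, θ)) ^ 2 * r))
        ≤ ENNReal.ofReal (h ^ 4) *
          ∫⁻ θ in Ioo (t j) (t (j + 1)), ENNReal.ofReal ((pd2 (pd2 u) (r, θ)) ^ 2 / r) := by
      intro j hjmem
      have hj' : j + 1 < N := by
        have := Finset.mem_range.1 hjmem; omega
      have hab : t j < t (j + 1) := htmono j hj'
      have hsub : Icc (t j) (t (j + 1)) ⊆ Icc (0:ℝ) Θ := by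
        apply Icc_subset_Icc
        · rw [← ht0]; exact hmono j (by omega) 0 (by omega)
        · rw [← htN]; exact hmono (N - 1) (by omega) (j + 1) (by omega)
      set f : ℝ → ℝ := fun θ => u (r, θ) - interp N t e u (r, θ) with hfdef
      set lin : ℝ → ℝ := fun θ => ∑ i ∈ Finset.range N, u (r, t i) *
        (e i (t j) + (e i (t (j + 1)) - e i (t j)) * (θ - t j) / (t (j + 1) - t j)) with hlindef
      set slope : ℝ := ∑ i ∈ Finset.range N,
        u (r, t i) * ((e i (t (j + 1)) - e i (t j)) / (t (j + 1) - t j)) with hslopedef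
      have hlineq : ∀ θ ∈ Icc (t j) (t (j + 1)), interp N t e u (r, θ) = lin θ := by
        intro θ hθ
        unfold interp
        apply Finset.sum_congr rfl
        intro i hi
        rw [hlin i (Finset.mem_range.1 hi) j hj' θ hθ]
      have hlinderiv : ∀ θ : ℝ, HasDerivAt lin slope θ := by
        intro θ
        apply HasDerivAt.fun_sum
        intro i _
        have h1 : HasDerivAt (fun y : ℝ => e i (t j) +
            (e i (t (j + 1)) - e i (t j)) * (y - t j) / (t (j + 1) - t j))
            ((e i (t (j + 1)) - e i (t j)) / (t (j + 1) - t j)) θ := by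
          have h2 := ((((hasDerivAt_id θ).sub_const (t j)).const_mul
            (e i (t (j + 1)) - e i (t j))).div_const (t (j + 1) - t j)).const_add (e i (t j))
          simpa using h2
        simpa using h1.const_mul (u (r, t i))
      -- boundary values
      have hnodeval : ∀ k, k < N → f (t k) = 0 := by
        intro k hk
        have : interp N t e u (r, t k) = u (r, t k) := by
          unfold interp
          rw [Finset.sum_eq_single k]
          · rw [hnode k hk k hk]; simp
          · intro i hi hik
            rw [hnode i (Finset.mem_range.1 hi) k hk, if_neg hik, mul_zero]
          · intro hk0; exact absurd (Finset.mem_range.2 hk) hk0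
        simp [hfdef, this]
      -- derivatives of the error within the piece
      have hfd : ∀ x ∈ Icc (t j) (t (j + 1)),
          HasDerivWithinAt f (g x - slope) (Icc (t j) (t (j + 1))) x := by
        intro x hx
        have h1 : HasDerivWithinAt (fun θ => u (r, θ) - lin θ) (g x - slope)
            (Icc (t j) (t (j + 1))) x :=
          ((hgd x (hsub hx)).mono hsub).sub (hlinderiv x).hasDerivWithinAt
        refine h1.congr (fun y hy => ?_) ?_
        · simp only [hfdef]; rw [hlineq y hy]
        · simp only [hfdef]; rw [hlineq x hx]
      have hg2d' : ∀ x ∈ Icc (t j) (t (j + 1)),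
          HasDerivWithinAt (fun y => g y - slope) (g2 x) (Icc (t j) (t (j + 1))) x :=
        fun x hx => ((hg2d x (hsub hx)).mono hsub).sub_const slope
      have h1D : ∫ x in (t j)..(t (j + 1)), f x ^ 2
          ≤ (t (j + 1) - t j) ^ 4 * ∫ x in (t j)..(t (j + 1)), g2 x ^ 2 :=
        oneD_s9 hab hfd hg2d' ((hgc.mono hsub).sub continuousOn_const) (hg2c.mono hsub)
          (hnodeval j (by omega)) (hnodeval (j + 1) (by omega))
      -- continuity / integrability
      have hfc : ContinuousOn f (Icc (t j) (t (j + 1))) :=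
        fun x hx => (hfd x hx).continuousWithinAt
      have hfint : IntegrableOn (fun θ => f θ ^ 2 * r) (Ioc (t j) (t (j + 1))) volume :=
        (((hfc.pow 2).mul continuousOn_const).integrableOn_Icc).mono_set Ioc_subset_Icc_self
      have hg2int : IntegrableOn (fun θ => g2 θ ^ 2 / r) (Ioo (t j) (t (j + 1))) volume :=
        ((((hg2c.mono hsub).pow 2).div_const r).integrableOn_Icc).mono_set Ioo_subset_Icc_self
      -- real-number estimate
      set T : ℝ := ∫ x in (t j)..(t (j + 1)), g2 x ^ 2 with hTdef
      have hT : 0 ≤ T := intervalIntegral.integral_nonneg hab.le (fun x _ => sq_nonneg _)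
      have hΔ4 : (t (j + 1) - t j) ^ 4 ≤ h ^ 4 :=
        pow_le_pow_left₀ (by linarith) (hh j hj') 4
      have hrr : r ≤ 1 / r := by
        rw [le_div_iff₀ hr0]; nlinarith
      have hreal : (∫ x in (t j)..(t (j + 1)), f x ^ 2) * r ≤ h ^ 4 * (T / r) := by
        calc (∫ x in (t j)..(t (j + 1)), f x ^ 2) * r
            ≤ ((t (j + 1) - t j) ^ 4 * T) * r :=
              mul_le_mul_of_nonneg_right h1D hr0.le
          _ ≤ (h ^ 4 * T) * r := by
              apply mul_le_mul_of_nonneg_right _ hr0.le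
              exact mul_le_mul_of_nonneg_right hΔ4 hT
          _ ≤ (h ^ 4 * T) * (1 / r) := by
              apply mul_le_mul_of_nonneg_left hrr (by positivity)
          _ = h ^ 4 * (T / r) := by ring
      -- assemble in ℝ≥0∞
      calc (∫⁻ θ in Ioc (t j) (t (j + 1)), ENNReal.ofReal
              (((fun p => u p - interp N t e u p) (r, θ)) ^ 2 * r))
          = ENNReal.ofReal (∫ θ in Ioc (t j) (t (j + 1)), f θ ^ 2 * r) :=
            (ofReal_integral_eq_lintegral_ofReal hfint
              (ae_of_all _ fun θ => mul_nonneg (sq_nonneg _) hr0.le)).symm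
        _ = ENNReal.ofReal ((∫ x in (t j)..(t (j + 1)), f x ^ 2) * r) := by
            rw [← intervalIntegral.integral_of_le hab.le,
              intervalIntegral.integral_mul_const]
        _ ≤ ENNReal.ofReal (h ^ 4 * (T / r)) := ENNReal.ofReal_le_ofReal hreal
        _ = ENNReal.ofReal (h ^ 4) * ENNReal.ofReal (T / r) :=
            ENNReal.ofReal_mul (by positivity)
        _ = ENNReal.ofReal (h ^ 4) *
              ENNReal.ofReal (∫ θ in Ioo (t j) (t (j + 1)), g2 θ ^ 2 / r) := by
            congr 1
            rw [hTdef, intervalIntegral.integral_of_le hab.le,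
              MeasureTheory.integral_Ioc_eq_integral_Ioo, ← MeasureTheory.integral_div]
        _ = ENNReal.ofReal (h ^ 4) *
              ∫⁻ θ in Ioo (t j) (t (j + 1)), ENNReal.ofReal (g2 θ ^ 2 / r) := by
            congr 1
            exact ofReal_integral_eq_lintegral_ofReal hg2int
              (ae_of_all _ fun θ => div_nonneg (sq_nonneg _) hr0.le)
        _ = ENNReal.ofReal (h ^ 4) *
              ∫⁻ θ in Ioo (t j) (t (j + 1)), ENNReal.ofReal ((pd2 (pd2 u) (r, θ)) ^ 2 / r) := by
            congr 1
            apply setLIntegral_congr_fun measurableSet_Ioo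
            exact fun θ hθ => by rw [hpd θ (hIoosub j hj' hθ)]
    -- sum the pieces
    calc (∫⁻ θ in Ioo (0:ℝ) Θ, ENNReal.ofReal
            (((fun p => u p - interp N t e u p) (r, θ)) ^ 2 * r))
        ≤ ∫⁻ θ in ⋃ j ∈ Finset.range (N - 1), Ioc (t j) (t (j + 1)), ENNReal.ofReal
            (((fun p => u p - interp N t e u p) (r, θ)) ^ 2 * r) :=
          lintegral_mono_set hcover
      _ = ∑ j ∈ Finset.range (N - 1), ∫⁻ θ in Ioc (t j) (t (j + 1)), ENNReal.ofReal
            (((fun p => u p - interp N t e u p) (r, θ)) ^ 2 * r) :=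
          lintegral_biUnion_finset hdisj (fun b _ => measurableSet_Ioc) _
      _ ≤ ∑ j ∈ Finset.range (N - 1), ENNReal.ofReal (h ^ 4) *
            ∫⁻ θ in Ioo (t j) (t (j + 1)), ENNReal.ofReal ((pd2 (pd2 u) (r, θ)) ^ 2 / r) :=
          Finset.sum_le_sum piece
      _ = ENNReal.ofReal (h ^ 4) * ∑ j ∈ Finset.range (N - 1),
            ∫⁻ θ in Ioo (t j) (t (j + 1)), ENNReal.ofReal ((pd2 (pd2 u) (r, θ)) ^ 2 / r) := by
          rw [Finset.mul_sum]
      _ = ENNReal.ofReal (h ^ 4) *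
            ∫⁻ θ in ⋃ j ∈ Finset.range (N - 1), Ioo (t j) (t (j + 1)),
              ENNReal.ofReal ((pd2 (pd2 u) (r, θ)) ^ 2 / r) := by
          rw [lintegral_biUnion_finset hdisj' (fun b _ => measurableSet_Ioo) _]
      _ ≤ ENNReal.ofReal (h ^ 4) *
            ∫⁻ θ in Ioo (0:ℝ) Θ, ENNReal.ofReal ((pd2 (pd2 u) (r, θ)) ^ 2 / r) := by
          apply mul_le_mul_right
          apply lintegral_mono_set
          exact Set.iUnion₂_subset fun j hj => hIoosub j (by
            have := Finset.mem_range.1 hj; omega)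
  -- outer integral over r
  unfold wL2r wL2invr
  calc (∫⁻ r in Ioo (0:ℝ) 1, ∫⁻ θ in Ioo (0:ℝ) Θ, ENNReal.ofReal
          (((fun p => u p - interp N t e u p) (r, θ)) ^ 2 * r))
      ≤ ∫⁻ r in Ioo (0:ℝ) 1, ENNReal.ofReal (h ^ 4) *
          ∫⁻ θ in Ioo (0:ℝ) Θ, ENNReal.ofReal ((pd2 (pd2 u) (r, θ)) ^ 2 / r) := by
        apply lintegral_mono_ae
        filter_upwards [ae_restrict_mem measurableSet_Ioo] with r hr
        exact main r hr
    _ = ENNReal.ofReal (h ^ 4) * ∫⁻ r in Ioo (0:ℝ) 1,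
          ∫⁻ θ in Ioo (0:ℝ) Θ, ENNReal.ofReal ((pd2 (pd2 u) (r, θ)) ^ 2 / r) :=
        lintegral_const_mul' _ _ ENNReal.ofReal_ne_top
end

section
/- For every twice continuously differentiable function u on [0,1] × [0,Θ], the radial derivative of the interpolation error satisfies ‖∂_r (u − Πu)‖²_{L²_r(Q)} ≤ 4 h² ‖∂_{rθ} u‖²_{L²_r(Q)}. -/
open MeasureTheory Set Real

/-- Monotonicity of the nodes. -/
lemma stmt10_mono {N : ℕ} {t : ℕ → ℝ} (htmono : ∀ j, j + 1 < N → t j < t (j + 1)) :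
    ∀ i j : ℕ, i ≤ j → j < N → t i ≤ t j := by
  intro i j hij hjN
  induction j with
  | zero => simp_all
  | succ k ih =>
    rcases Nat.eq_or_lt_of_le hij with rfl | hlt
    · exact le_refl _
    · exact le_trans (ih (Nat.lt_succ_iff.mp hlt) (Nat.lt_of_succ_lt hjN))
        (htmono k hjN).le

/-- Cauchy–Schwarz on an interval: `(∫ |q|)² ≤ (b-a) ∫ q²`. -/
lemma stmt10_cs {q : ℝ → ℝ} {a b : ℝ} (hab : a ≤ b)
    (hq : ContinuousOn q (Icc a b)) :
    (∫ x in a..b, |q x|) ^ 2 ≤ (b - a) * ∫ x in a..b, (q x) ^ 2 := by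
  set A := ∫ x in a..b, |q x| with hA
  have habs : IntervalIntegrable (fun x => |q x|) volume a b :=
    ContinuousOn.intervalIntegrable (by rw [uIcc_of_le hab]; exact hq.abs)
  have hsq : IntervalIntegrable (fun x => (q x) ^ 2) volume a b :=
    ContinuousOn.intervalIntegrable (by rw [uIcc_of_le hab]; exact hq.pow 2)
  have key : 0 ≤ ∫ x in a..b, ((b - a) * |q x| - A) ^ 2 := by
    apply intervalIntegral.integral_nonneg hab
    intro x _; positivity
  have expand : ∫ x in a..b, ((b - a) * |q x| - A) ^ 2
      = (b - a) ^ 2 * (∫ x in a..b, (q x) ^ 2) - 2 * (b - a) * A * A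
        + A ^ 2 * (b - a) := by
    have hpt : ∀ x, ((b - a) * |q x| - A) ^ 2
        = (b - a) ^ 2 * (q x) ^ 2 - 2 * (b - a) * A * |q x| + A ^ 2 := by
      intro x
      have h1 : |q x| ^ 2 = (q x) ^ 2 := sq_abs (q x)
      nlinarith [h1]
    simp only [hpt]
    rw [intervalIntegral.integral_add (((hsq.const_mul _).sub (habs.const_mul _))) intervalIntegrable_const,
      intervalIntegral.integral_sub (hsq.const_mul _) (habs.const_mul _),
      intervalIntegral.integral_const_mul, intervalIntegral.integral_const_mul,
      intervalIntegral.integral_const, ← hA, smul_eq_mul]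
    ring
  rcases eq_or_lt_of_le hab with rfl | hlt
  · simp [hA, intervalIntegral.integral_same]
  · nlinarith [key, expand]

/-- FTC piece: `w x - w a = ∫_a^x q`. -/
lemma stmt10_ftc {w q : ℝ → ℝ} {a b : ℝ} (hab : a ≤ b)
    (hw : ContinuousOn w (Icc a b)) (hq : ContinuousOn q (Icc a b))
    (hderiv : ∀ x ∈ Ioo a b, HasDerivAt w (q x) x) :
    ∀ x ∈ Icc a b, ∫ y in a..x, q y = w x - w a := by
  intro x hx
  apply intervalIntegral.integral_eq_sub_of_hasDeriv_right_of_le hx.1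
  · exact hw.mono (Icc_subset_Icc_right hx.2)
  · intro y hy
    exact (hderiv y ⟨hy.1, lt_of_lt_of_le hy.2 hx.2⟩).hasDerivWithinAt
  · exact ContinuousOn.intervalIntegrable
      (by rw [uIcc_of_le hx.1]; exact hq.mono (Icc_subset_Icc_right hx.2))

/-- 1-D linear interpolation error estimate. -/
lemma stmt10_oneD {w q : ℝ → ℝ} {a b : ℝ} (hab : a < b)
    (hw : ContinuousOn w (Icc a b)) (hq : ContinuousOn q (Icc a b))
    (hderiv : ∀ x ∈ Ioo a b, HasDerivAt w (q x) x) :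
    ∀ θ ∈ Icc a b,
      (w θ - (w a + (w b - w a) * (θ - a) / (b - a))) ^ 2
        ≤ (b - a) * ∫ x in a..b, (q x) ^ 2 := by
  intro θ hθ
  have hba : (0:ℝ) < b - a := by linarith [hab]
  set s : ℝ := (θ - a) / (b - a) with hs
  have hs0 : 0 ≤ s := div_nonneg (by linarith [hθ.1]) hba.le
  have hs1 : s ≤ 1 := (div_le_one hba).mpr (by linarith [hθ.2])
  have hint1 : IntervalIntegrable q volume a θ :=
    ContinuousOn.intervalIntegrable
      (by rw [uIcc_of_le hθ.1]; exact hq.mono (Icc_subset_Icc_right hθ.2))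
  have hint2 : IntervalIntegrable q volume θ b :=
    ContinuousOn.intervalIntegrable
      (by rw [uIcc_of_le hθ.2]; exact hq.mono (Icc_subset_Icc_left hθ.1))
  have habs1 : IntervalIntegrable (fun x => |q x|) volume a θ := hint1.abs
  have habs2 : IntervalIntegrable (fun x => |q x|) volume θ b := hint2.abs
  have hftc1 : ∫ y in a..θ, q y = w θ - w a := stmt10_ftc hab.le hw hq hderiv θ hθ
  have hftc2 : ∫ y in θ..b, q y = w b - w θ := by
    have := stmt10_ftc (a := θ) (b := b) hθ.2
      (hw.mono (Icc_subset_Icc_left hθ.1)) (hq.mono (Icc_subset_Icc_left hθ.1))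
      (fun x hx => hderiv x ⟨lt_of_le_of_lt hθ.1 hx.1, hx.2⟩) b ⟨hθ.2, le_refl b⟩
    exact this
  have hb1 : |w θ - w a| ≤ ∫ x in a..θ, |q x| := by
    rw [← hftc1]; exact intervalIntegral.abs_integral_le_integral_abs hθ.1
  have hb2 : |w b - w θ| ≤ ∫ x in θ..b, |q x| := by
    rw [← hftc2]; exact intervalIntegral.abs_integral_le_integral_abs hθ.2
  have hnn1 : 0 ≤ ∫ x in a..θ, |q x| :=
    intervalIntegral.integral_nonneg hθ.1 (fun x _ => abs_nonneg _)
  have hnn2 : 0 ≤ ∫ x in θ..b, |q x| :=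
    intervalIntegral.integral_nonneg hθ.2 (fun x _ => abs_nonneg _)
  have hadd : (∫ x in a..θ, |q x|) + ∫ x in θ..b, |q x| = ∫ x in a..b, |q x| :=
    intervalIntegral.integral_add_adjacent_intervals habs1 habs2
  set A := ∫ x in a..b, |q x| with hA
  have hAnn : 0 ≤ A := by rw [← hadd]; linarith
  have hE : w θ - (w a + (w b - w a) * (θ - a) / (b - a))
      = (1 - s) * (w θ - w a) - s * (w b - w θ) := by
    have : (w b - w a) * (θ - a) / (b - a) = s * (w b - w a) := by
      rw [hs]; ring
    rw [this]; ring
  have hEA : |w θ - (w a + (w b - w a) * (θ - a) / (b - a))| ≤ A := by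
    rw [hE]
    calc |(1 - s) * (w θ - w a) - s * (w b - w θ)|
        ≤ |(1 - s) * (w θ - w a)| + |s * (w b - w θ)| := abs_sub _ _
      _ = (1 - s) * |w θ - w a| + s * |w b - w θ| := by
          rw [abs_mul, abs_mul, abs_of_nonneg (by linarith : (0:ℝ) ≤ 1 - s),
            abs_of_nonneg hs0]
      _ ≤ |w θ - w a| + |w b - w θ| := by
          have h1 : (1 - s) * |w θ - w a| ≤ |w θ - w a| := by
            nlinarith [abs_nonneg (w θ - w a)]
          have h2 : s * |w b - w θ| ≤ |w b - w θ| := by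
            nlinarith [abs_nonneg (w b - w θ)]
          linarith
      _ ≤ (∫ x in a..θ, |q x|) + ∫ x in θ..b, |q x| := by linarith
      _ = A := hadd
  calc (w θ - (w a + (w b - w a) * (θ - a) / (b - a))) ^ 2
      ≤ A ^ 2 := by nlinarith [abs_nonneg (w θ - (w a + (w b - w a) * (θ - a) / (b - a))), sq_abs (w θ - (w a + (w b - w a) * (θ - a) / (b - a)))]
    _ ≤ (b - a) * ∫ x in a..b, (q x) ^ 2 := stmt10_cs hab.le hq

lemma stmt10_le0 (t : ℕ → ℝ) : ∀ n : ℕ, (∀ j < n, t j ≤ t (j + 1)) → t 0 ≤ t n := by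
  intro n
  induction n with
  | zero => intro _; exact le_refl _
  | succ k ih =>
    intro hmono
    exact le_trans (ih (fun j hj => hmono j (Nat.lt_succ_of_lt hj)))
      (hmono k (Nat.lt_succ_self k))

/-- Partition additivity of the set lintegral over `Ioc` intervals. -/
lemma stmt10_partition (f : ℝ → ENNReal) (t : ℕ → ℝ) (n : ℕ)
    (hmono : ∀ j < n, t j ≤ t (j + 1)) :
    ∫⁻ x in Ioc (t 0) (t n), f x
      = ∑ j ∈ Finset.range n, ∫⁻ x in Ioc (t j) (t (j + 1)), f x := by
  induction n with
  | zero => simp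
  | succ m ih =>
    have h0m : t 0 ≤ t m := stmt10_le0 t m (fun j hj => hmono j (Nat.lt_succ_of_lt hj))
    have hsplit : Ioc (t 0) (t (m + 1)) = Ioc (t 0) (t m) ∪ Ioc (t m) (t (m + 1)) := by
      rw [Set.Ioc_union_Ioc_eq_Ioc h0m (hmono m (Nat.lt_succ_self m))]
    rw [hsplit, lintegral_union measurableSet_Ioc (Set.Ioc_disjoint_Ioc_of_le le_rfl),
      ih (fun j hj => hmono j (Nat.lt_succ_of_lt hj)), Finset.sum_range_succ]

/-- Radial derivative error estimate for the interpolant: for `u`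
twice continuously differentiable on `[0,1] × [0,Θ]`,
`‖∂_r (u − Πu)‖²_{L²_r(Q)} ≤ 4 h² ‖∂_{rθ} u‖²_{L²_r(Q)}`,
where `h = max_j (θ_{j+1} − θ_j)`. -/
theorem stmt10 (Θ : ℝ) (hΘ₀ : 0 < Θ) (hΘ₂ : Θ < 2 * π)
    (N : ℕ) (hN : 2 ≤ N) (t : ℕ → ℝ) (e : ℕ → ℝ → ℝ)
    (ht0 : t 0 = 0) (htN : t (N - 1) = Θ)
    (htmono : ∀ j, j + 1 < N → t j < t (j + 1))
    (hnode : ∀ i < N, ∀ j < N, e i (t j) = if i = j then 1 else 0)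
    (hlin : ∀ i < N, ∀ j, j + 1 < N → ∀ x ∈ Icc (t j) (t (j + 1)),
      e i x = e i (t j) + (e i (t (j + 1)) - e i (t j)) * (x - t j) / (t (j + 1) - t j))
    (h : ℝ) (hmax : IsGreatest ((fun j => t (j + 1) - t j) '' {j : ℕ | j + 1 < N}) h)
    (u : ℝ × ℝ → ℝ) (hu : ContDiffOn ℝ 2 u (Icc (0:ℝ) 1 ×ˢ Icc (0:ℝ) Θ)) :
    wL2r Θ (pd1 (fun p => u p - interp N t e u p))
      ≤ ENNReal.ofReal (4 * h ^ 2) * wL2r Θ (pd2 (pd1 u)) := by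

  -- basic setup
  classical
  set S : Set (ℝ × ℝ) := Icc (0:ℝ) 1 ×ˢ Icc (0:ℝ) Θ with hSdef
  have hSu : UniqueDiffOn ℝ S := (uniqueDiffOn_Icc one_pos).prod (uniqueDiffOn_Icc hΘ₀)
  set F : ℝ × ℝ → ℝ := fun p => fderivWithin ℝ u S p (1, 0) with hFdef
  have hF1 : ContDiffOn ℝ 1 F S :=
    (hu.fderivWithin hSu (by norm_num)).clm_apply contDiffOn_const
  have hti : ∀ i, i < N → t i ∈ Icc (0:ℝ) Θ := by
    intro i hi
    constructor
    · rw [← ht0]; exact stmt10_mono htmono 0 i (Nat.zero_le _) hi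
    · rw [← htN]; exact stmt10_mono htmono i (N-1) (by omega) (by omega)
  have h0 : 0 ≤ h := by
    obtain ⟨⟨j, hj, hjeq⟩, -⟩ := hmax
    have hje : t (j + 1) - t j = h := hjeq
    linarith [htmono j hj]
  -- partial derivative of u in r equals F
  have hA : ∀ r ∈ Ioo (0:ℝ) 1, ∀ θ ∈ Icc (0:ℝ) Θ,
      HasDerivAt (fun s => u (s, θ)) (F (r, θ)) r := by
    intro r hr θ hθ
    have hmem : ((r, θ) : ℝ × ℝ) ∈ S := ⟨⟨hr.1.le, hr.2.le⟩, hθ⟩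
    have hdiff : DifferentiableWithinAt ℝ u S (r, θ) :=
      (hu.differentiableOn (by norm_num)) _ hmem
    have hfd : HasFDerivWithinAt u (fderivWithin ℝ u S (r, θ)) S (r, θ) :=
      hdiff.hasFDerivWithinAt
    have hg : HasDerivWithinAt (fun s : ℝ => ((s, θ) : ℝ × ℝ)) ((1:ℝ), (0:ℝ))
        (Ioo (0:ℝ) 1) r := ((hasDerivAt_id r).prodMk (hasDerivAt_const r θ)).hasDerivWithinAt
    have hmaps : MapsTo (fun s : ℝ => ((s, θ) : ℝ × ℝ)) (Ioo (0:ℝ) 1) S :=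
      fun s hs => ⟨Ioo_subset_Icc_self hs, hθ⟩
    have hcomp := hfd.comp_hasDerivWithinAt r hg hmaps
    exact hcomp.hasDerivAt (Ioo_mem_nhds hr.1 hr.2)
  have hpd1 : ∀ r ∈ Ioo (0:ℝ) 1, ∀ θ ∈ Icc (0:ℝ) Θ, pd1 u (r, θ) = F (r, θ) :=
    fun r hr θ hθ => (hA r hr θ hθ).deriv
  -- partial derivative of the error
  have hpdE : ∀ r ∈ Ioo (0:ℝ) 1, ∀ θ ∈ Icc (0:ℝ) Θ,
      pd1 (fun p => u p - interp N t e u p) (r, θ)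
        = F (r, θ) - ∑ i ∈ Finset.range N, F (r, t i) * e i θ := by
    intro r hr θ hθ
    have hd : HasDerivAt (fun s => u (s, θ) - ∑ i ∈ Finset.range N, u (s, t i) * e i θ)
        (F (r, θ) - ∑ i ∈ Finset.range N, F (r, t i) * e i θ) r :=
      (hA r hr θ hθ).sub (HasDerivAt.fun_sum
        (fun i hi => (hA r hr (t i) (hti i (Finset.mem_range.mp hi))).mul_const (e i θ)))
    exact hd.deriv
  -- the inner (angular) estimate for fixed r
  have hinner : ∀ r ∈ Ioo (0:ℝ) 1,
      (∫⁻ θ in Ioo (0:ℝ) Θ,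
        ENNReal.ofReal ((pd1 (fun p => u p - interp N t e u p) (r, θ)) ^ 2 * r))
      ≤ ENNReal.ofReal (4 * h ^ 2) *
        ∫⁻ θ in Ioo (0:ℝ) Θ, ENNReal.ofReal ((pd2 (pd1 u) (r, θ)) ^ 2 * r) := by
    intro r hr
    set w : ℝ → ℝ := fun θ => F (r, θ) with hwdef
    set q : ℝ → ℝ := derivWithin w (Icc (0:ℝ) Θ) with hqdef
    have hwC1 : ContDiffOn ℝ 1 w (Icc (0:ℝ) Θ) := by
      have := hF1.comp (contDiffOn_const.prodMk contDiffOn_id)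
        (fun θ hθ => (⟨⟨hr.1.le, hr.2.le⟩, hθ⟩ : ((r, θ) : ℝ × ℝ) ∈ S))
      exact this
    have hwcont : ContinuousOn w (Icc (0:ℝ) Θ) := hwC1.continuousOn
    have hqcont : ContinuousOn q (Icc (0:ℝ) Θ) :=
      hwC1.continuousOn_derivWithin (uniqueDiffOn_Icc hΘ₀) le_rfl
    have hqderiv : ∀ x ∈ Ioo (0:ℝ) Θ, HasDerivAt w (q x) x := fun x hx =>
      ((hwC1.differentiableOn one_ne_zero x (Ioo_subset_Icc_self hx)).hasDerivWithinAt).hasDerivAt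
        (Icc_mem_nhds hx.1 hx.2)
    have hq_eq : ∀ x ∈ Ioo (0:ℝ) Θ, pd2 (pd1 u) (r, x) = q x := by
      intro x hx
      have heq : (fun τ => pd1 u (r, τ)) =ᶠ[nhds x] w := by
        filter_upwards [Ioo_mem_nhds hx.1 hx.2] with τ hτ
        exact hpd1 r hr τ (Ioo_subset_Icc_self hτ)
      have h1 : pd2 (pd1 u) (r, x) = deriv w x := heq.deriv_eq
      rw [h1, (hqderiv x hx).deriv]
    -- per subinterval estimate
    have hsub : ∀ j, j + 1 < N →
        (∫⁻ θ in Ioc (t j) (t (j+1)),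
          ENNReal.ofReal ((pd1 (fun p => u p - interp N t e u p) (r, θ)) ^ 2 * r))
        ≤ ENNReal.ofReal (h ^ 2) *
          ∫⁻ θ in Ioc (t j) (t (j+1)), ENNReal.ofReal ((q θ) ^ 2 * r) := by
      intro j hj
      have hjN : j < N := Nat.lt_of_succ_lt hj
      set a := t j with hadef
      set b := t (j+1) with hbdef
      have hab : a < b := htmono j hj
      have hIcc_sub : Icc a b ⊆ Icc (0:ℝ) Θ :=
        Icc_subset_Icc (hti j hjN).1 (hti (j+1) hj).2
      have hIoo_sub : Ioo a b ⊆ Ioo (0:ℝ) Θ := by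
        intro x hx
        exact ⟨lt_of_le_of_lt (hti j hjN).1 hx.1, lt_of_lt_of_le hx.2 (hti (j+1) hj).2⟩
      have hest := stmt10_oneD hab (hwcont.mono hIcc_sub) (hqcont.mono hIcc_sub)
        (fun x hx => hqderiv x (hIoo_sub hx))
      -- interpolant is the linear interpolation on [a,b]
      have hinterpsum : ∀ θ ∈ Icc a b,
          (∑ i ∈ Finset.range N, F (r, t i) * e i θ)
            = F (r, t j) + (F (r, t (j+1)) - F (r, t j)) * (θ - a) / (b - a) := by
        intro θ hθ
        have hterm : ∀ i ∈ Finset.range N, F (r, t i) * e i θ =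
            (if i = j then F (r, t i) * (1 - (θ - a)/(b - a)) else 0)
            + (if i = j + 1 then F (r, t i) * ((θ - a)/(b - a)) else 0) := by
          intro i hi
          have hiN : i < N := Finset.mem_range.mp hi
          rw [hlin i hiN j hj θ hθ, hnode i hiN j hjN, hnode i hiN (j+1) hj,
            ← hadef, ← hbdef]
          by_cases h1 : i = j
          · simp only [if_pos h1, if_neg (show ¬ i = j + 1 by omega)]
            ring
          · by_cases h2 : i = j + 1
            · simp only [if_neg h1, if_pos h2]
              ring
            · simp only [if_neg h1, if_neg h2]
              ring
        calc (∑ i ∈ Finset.range N, F (r, t i) * e i θ)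
            = ∑ i ∈ Finset.range N,
                ((if i = j then F (r, t i) * (1 - (θ - a)/(b - a)) else 0)
                + (if i = j + 1 then F (r, t i) * ((θ - a)/(b - a)) else 0)) :=
              Finset.sum_congr rfl hterm
          _ = (if j ∈ Finset.range N then F (r, t j) * (1 - (θ - a)/(b - a)) else 0)
              + (if j + 1 ∈ Finset.range N then F (r, t (j+1)) * ((θ - a)/(b - a)) else 0) := by
              rw [Finset.sum_add_distrib, Finset.sum_ite_eq' (Finset.range N) j,
                Finset.sum_ite_eq' (Finset.range N) (j+1)]
          _ = F (r, t j) * (1 - (θ - a)/(b - a)) + F (r, t (j+1)) * ((θ - a)/(b - a)) := by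
              rw [if_pos (Finset.mem_range.mpr hjN), if_pos (Finset.mem_range.mpr hj)]
          _ = F (r, t j) + (F (r, t (j+1)) - F (r, t j)) * (θ - a) / (b - a) := by ring
      have hEeq : ∀ θ ∈ Icc a b,
          pd1 (fun p => u p - interp N t e u p) (r, θ)
            = w θ - (w a + (w b - w a) * (θ - a) / (b - a)) := by
        intro θ hθ
        rw [hpdE r hr θ (hIcc_sub hθ), hinterpsum θ hθ]
      set B := ∫ x in a..b, (q x) ^ 2 with hBdef
      have hBnn : 0 ≤ B :=
        intervalIntegral.integral_nonneg hab.le (fun x _ => sq_nonneg _)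
      have hbh : b - a ≤ h := hmax.2 ⟨j, hj, rfl⟩
      -- pointwise bound on the subinterval
      have hptw : ∀ θ ∈ Ioc a b,
          ENNReal.ofReal ((pd1 (fun p => u p - interp N t e u p) (r, θ)) ^ 2 * r)
            ≤ ENNReal.ofReal (((b - a) * B) * r) := by
        intro θ hθ
        apply ENNReal.ofReal_le_ofReal
        have hθ' : θ ∈ Icc a b := Ioc_subset_Icc_self hθ
        rw [hEeq θ hθ']
        have := hest θ hθ'
        have hr0 : (0:ℝ) ≤ r := hr.1.le
        nlinarith [this, sq_nonneg (w θ - (w a + (w b - w a) * (θ - a) / (b - a)))]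
      calc (∫⁻ θ in Ioc a b,
              ENNReal.ofReal ((pd1 (fun p => u p - interp N t e u p) (r, θ)) ^ 2 * r))
          ≤ ∫⁻ _ in Ioc a b, ENNReal.ofReal (((b - a) * B) * r) := by
            refine lintegral_mono_ae ?_
            exact (ae_restrict_iff' measurableSet_Ioc).mpr (Filter.Eventually.of_forall hptw)
        _ = ENNReal.ofReal (((b - a) * B) * r) * volume (Ioc a b) := setLIntegral_const _ _
        _ = ENNReal.ofReal (((b - a) * B) * r) * ENNReal.ofReal (b - a) := by
            rw [Real.volume_Ioc]
        _ = ENNReal.ofReal ((((b - a) * B) * r) * (b - a)) := by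
            rw [← ENNReal.ofReal_mul
              (mul_nonneg (mul_nonneg (by linarith) hBnn) hr.1.le)]
        _ ≤ ENNReal.ofReal ((h ^ 2) * (B * r)) := by
            apply ENNReal.ofReal_le_ofReal
            have hr0 : (0:ℝ) ≤ r := hr.1.le
            have hsq : (b - a) ^ 2 ≤ h ^ 2 := by nlinarith [hbh, hab]
            have hBr : 0 ≤ B * r := mul_nonneg hBnn hr0
            nlinarith [hsq, hBr]
        _ = ENNReal.ofReal (h ^ 2) * ENNReal.ofReal (B * r) := by
            rw [ENNReal.ofReal_mul (by positivity)]
        _ = ENNReal.ofReal (h ^ 2) * ∫⁻ θ in Ioc a b, ENNReal.ofReal ((q θ) ^ 2 * r) := by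
            congr 1
            have hint : IntegrableOn (fun θ => (q θ) ^ 2 * r) (Icc a b) :=
              (((hqcont.mono hIcc_sub).pow 2).mul continuousOn_const).integrableOn_Icc
            have hint' : IntegrableOn (fun θ => (q θ) ^ 2 * r) (Ioc a b) :=
              hint.mono_set Ioc_subset_Icc_self
            rw [← MeasureTheory.ofReal_integral_eq_lintegral_ofReal hint'
              (Filter.Eventually.of_forall (fun x => mul_nonneg (sq_nonneg _) hr.1.le))]
            congr 1
            rw [hBdef, intervalIntegral.integral_of_le hab.le, ← integral_mul_const]
      -- assemble over the partition
    have hmono' : ∀ j < N - 1, t j ≤ t (j + 1) := fun j hj => (htmono j (by omega)).le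
    have hIooIoc : Ioo (0:ℝ) Θ ⊆ Ioc (t 0) (t (N-1)) := by
      rw [ht0, htN]; exact fun x hx => ⟨hx.1, hx.2.le⟩
    calc (∫⁻ θ in Ioo (0:ℝ) Θ,
            ENNReal.ofReal ((pd1 (fun p => u p - interp N t e u p) (r, θ)) ^ 2 * r))
        ≤ ∫⁻ θ in Ioc (t 0) (t (N-1)),
            ENNReal.ofReal ((pd1 (fun p => u p - interp N t e u p) (r, θ)) ^ 2 * r) :=
          lintegral_mono_set hIooIoc
      _ = ∑ j ∈ Finset.range (N-1), ∫⁻ θ in Ioc (t j) (t (j+1)),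
            ENNReal.ofReal ((pd1 (fun p => u p - interp N t e u p) (r, θ)) ^ 2 * r) :=
          stmt10_partition _ t (N-1) hmono'
      _ ≤ ∑ j ∈ Finset.range (N-1), ENNReal.ofReal (h ^ 2) *
            ∫⁻ θ in Ioc (t j) (t (j+1)), ENNReal.ofReal ((q θ) ^ 2 * r) :=
          Finset.sum_le_sum (fun j hj => hsub j (by
            have := Finset.mem_range.mp hj; omega))
      _ = ENNReal.ofReal (h ^ 2) * ∑ j ∈ Finset.range (N-1),
            ∫⁻ θ in Ioc (t j) (t (j+1)), ENNReal.ofReal ((q θ) ^ 2 * r) := by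
          rw [Finset.mul_sum]
      _ = ENNReal.ofReal (h ^ 2) *
            ∫⁻ θ in Ioc (t 0) (t (N-1)), ENNReal.ofReal ((q θ) ^ 2 * r) := by
          rw [stmt10_partition _ t (N-1) hmono']
      _ = ENNReal.ofReal (h ^ 2) *
            ∫⁻ θ in Ioo (0:ℝ) Θ, ENNReal.ofReal ((q θ) ^ 2 * r) := by
          rw [ht0, htN, ← setLIntegral_congr Ioo_ae_eq_Ioc]
      _ = ENNReal.ofReal (h ^ 2) *
            ∫⁻ θ in Ioo (0:ℝ) Θ, ENNReal.ofReal ((pd2 (pd1 u) (r, θ)) ^ 2 * r) := by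
          congr 1
          apply setLIntegral_congr_fun measurableSet_Ioo
          intro x hx
          simp only [hq_eq x hx]
      _ ≤ ENNReal.ofReal (4 * h ^ 2) *
            ∫⁻ θ in Ioo (0:ℝ) Θ, ENNReal.ofReal ((pd2 (pd1 u) (r, θ)) ^ 2 * r) := by
          apply mul_le_mul_left
          apply ENNReal.ofReal_le_ofReal
          nlinarith [sq_nonneg h]
  -- conclude: integrate the inner estimate in r
  unfold wL2r
  calc (∫⁻ r in Ioo (0:ℝ) 1, ∫⁻ θ in Ioo (0:ℝ) Θ,
          ENNReal.ofReal ((pd1 (fun p => u p - interp N t e u p) (r, θ)) ^ 2 * r))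
      ≤ ∫⁻ r in Ioo (0:ℝ) 1, ENNReal.ofReal (4 * h ^ 2) *
          ∫⁻ θ in Ioo (0:ℝ) Θ, ENNReal.ofReal ((pd2 (pd1 u) (r, θ)) ^ 2 * r) := by
        refine lintegral_mono_ae ?_
        exact (ae_restrict_iff' measurableSet_Ioo).mpr (Filter.Eventually.of_forall hinner)
    _ = ENNReal.ofReal (4 * h ^ 2) * ∫⁻ r in Ioo (0:ℝ) 1,
          ∫⁻ θ in Ioo (0:ℝ) Θ, ENNReal.ofReal ((pd2 (pd1 u) (r, θ)) ^ 2 * r) :=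
        lintegral_const_mul' _ _ ENNReal.ofReal_ne_top
end
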